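/- arXiv:1303.2800 — 2 statements merged into one kernel-verified Lean document; each statement's English description precedes it below -/
import Mathlib

section
/- (Theorem 3.2, parts (1) and (2).) For every symmetric approximate design P: (1) C(P) is completely symmetric, i.e., all its diagonal entries are equal and all its off-diagonal entries are equal; (2) tr(C(P)) = n · min_{x∈ℝ} ∑_s p_s q_s(x). -/
open Matrix Finset

noncomputable section

/-- `B^m_{i,j}`: the `i × j` real matrix whose upper-left `m × m` block is
`B_m = I_m − J_m/m` and whose remaining entries are `0`. -/
def Bblock (m i j : ℕ) : Matrix (Fin i) (Fin j) ℝ :=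
  Matrix.of fun a b =>
    if (a : ℕ) < m ∧ (b : ℕ) < m then
      (if (a : ℕ) = (b : ℕ) then 1 else 0) - 1 / (m : ℝ)
    else 0

/-- `B_k = I_k − J_k/k`. -/
def Bsq (k : ℕ) : Matrix (Fin k) (Fin k) ℝ := Bblock k k k

/-- Partial sums `a_{j,k} = ∑_{i=j}^k a_i`. -/
def aInt (a : ℕ → ℝ) (j k : ℕ) : ℝ := ∑ i ∈ Finset.Icc j k, a i

/-- `α_k = n⁻¹((n+1)a_k + a_{1,k−1}^{n+1} − a_{1,k}^{n+1})`. -/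
def alphaCoef (n : ℕ) (a : ℕ → ℝ) (k : ℕ) : ℝ :=
  (((n : ℝ) + 1) * a k + (aInt a 1 (k - 1)) ^ (n + 1) - (aInt a 1 k) ^ (n + 1)) / (n : ℝ)

/-- `β_k = a_k + a_{k+1,p} a_{1,k}^n − a_{k,p} a_{1,k−1}^n`. -/
def betaCoef (p n : ℕ) (a : ℕ → ℝ) (k : ℕ) : ℝ :=
  a k + aInt a (k + 1) p * (aInt a 1 k) ^ n - aInt a k p * (aInt a 1 (k - 1)) ^ n

/-- `A = ∑_{k=1}^p α_k B^k_p`. -/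
def Amat (p n : ℕ) (a : ℕ → ℝ) : Matrix (Fin p) (Fin p) ℝ :=
  ∑ k ∈ Finset.Icc 1 p, alphaCoef n a k • Bblock k p p

/-- `B = ∑_{k=1}^p β_k B^k_p`. -/
def Bmat (p n : ℕ) (a : ℕ → ℝ) : Matrix (Fin p) (Fin p) ℝ :=
  ∑ k ∈ Finset.Icc 1 p, betaCoef p n a k • Bblock k p p


/-- Treatment/period incidence matrix `T_s` of a treatment sequence `s`
(periods are indexed by `Fin p`, treatments by `Fin t`). -/
def Tmat {p t : ℕ} (s : Fin p → Fin t) : Matrix (Fin p) (Fin t) ℝ :=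
  Matrix.of fun k i => if s k = i then 1 else 0

/-- Carryover incidence matrix `F_s`: `(F_s)_{k,i} = 1` iff `k ≥ 2` and the
treatment in period `k − 1` is `i`. -/
def Fmat {p t : ℕ} (s : Fin p → Fin t) : Matrix (Fin p) (Fin t) ℝ :=
  Matrix.of fun k i =>
    if (k : ℕ) = 0 then 0
    else if s ⟨(k : ℕ) - 1, lt_of_le_of_lt (Nat.sub_le _ _) k.isLt⟩ = i then 1 else 0

/-- `T̂_s = T_s B_t`. -/
def That {p t : ℕ} (s : Fin p → Fin t) : Matrix (Fin p) (Fin t) ℝ := Tmat s * Bsq t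

/-- `F̂_s = F_s B_t`. -/
def Fhat {p t : ℕ} (s : Fin p → Fin t) : Matrix (Fin p) (Fin t) ℝ := Fmat s * Bsq t

/-- An approximate design: a probability vector indexed by all `t^p` sequences. -/
def IsDesign {p t : ℕ} (P : (Fin p → Fin t) → ℝ) : Prop :=
  (∀ s, 0 ≤ P s) ∧ ∑ s, P s = 1

/-- A design is symmetric if it is invariant under relabeling of treatments. -/
def IsSymmetricDesign {p t : ℕ} (P : (Fin p → Fin t) → ℝ) : Prop :=
  ∀ (σ : Equiv.Perm (Fin t)) (s : Fin p → Fin t), P (fun k => σ (s k)) = P s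

/-- `T̄ = ∑_s p_s T_s`. -/
def Tbar {p t : ℕ} (P : (Fin p → Fin t) → ℝ) : Matrix (Fin p) (Fin t) ℝ :=
  ∑ s, P s • Tmat s

/-- `F̄ = ∑_s p_s F_s`. -/
def Fbar {p t : ℕ} (P : (Fin p → Fin t) → ℝ) : Matrix (Fin p) (Fin t) ℝ :=
  ∑ s, P s • Fmat s

/-- `C₁₁(P) = n(∑_s p_s T_s' A T_s − T̄' B T̄)`. -/
def C11 (p t n : ℕ) (a : ℕ → ℝ) (P : (Fin p → Fin t) → ℝ) : Matrix (Fin t) (Fin t) ℝ :=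
  (n : ℝ) • (∑ s, P s • ((Tmat s)ᵀ * Amat p n a * Tmat s) - (Tbar P)ᵀ * Bmat p n a * Tbar P)

/-- `C₁₂(P) = n(∑_s p_s T_s' A F_s − T̄' B F̄)`. -/
def C12 (p t n : ℕ) (a : ℕ → ℝ) (P : (Fin p → Fin t) → ℝ) : Matrix (Fin t) (Fin t) ℝ :=
  (n : ℝ) • (∑ s, P s • ((Tmat s)ᵀ * Amat p n a * Fmat s) - (Tbar P)ᵀ * Bmat p n a * Fbar P)

/-- `C₂₂(P) = n(∑_s p_s F_s' A F_s − F̄' B F̄)`. -/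
def C22 (p t n : ℕ) (a : ℕ → ℝ) (P : (Fin p → Fin t) → ℝ) : Matrix (Fin t) (Fin t) ℝ :=
  (n : ℝ) • (∑ s, P s • ((Fmat s)ᵀ * Amat p n a * Fmat s) - (Fbar P)ᵀ * Bmat p n a * Fbar P)

/-- `W` is a generalized inverse of `C`. -/
def IsGInv {t : ℕ} (C W : Matrix (Fin t) (Fin t) ℝ) : Prop := C * W * C = C

/-- The information matrix `C(P) = C₁₁(P) − C₁₂(P) W C₂₁(P)`, computed with a
generalized inverse `W` of `C₂₂(P)` (its value does not depend on the choice). -/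
def CInfo (p t n : ℕ) (a : ℕ → ℝ) (P : (Fin p → Fin t) → ℝ)
    (W : Matrix (Fin t) (Fin t) ℝ) : Matrix (Fin t) (Fin t) ℝ :=
  C11 p t n a P - C12 p t n a P * W * (C12 p t n a P)ᵀ

/-- The `t × t` permutation matrix of a permutation `σ` of the treatments. -/
def permMat (t : ℕ) (σ : Equiv.Perm (Fin t)) : Matrix (Fin t) (Fin t) ℝ :=
  Matrix.of fun i j => if σ j = i then 1 else 0

/-- An optimality criterion: a real-valued function `Φ` on `t × t` real symmetric
matrices which is (C.1) concave, (C.2) invariant under simultaneous permutation of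
rows and columns, and (C.3) nondecreasing under positive scaling of a positive
semidefinite matrix. -/
def IsCriterion (t : ℕ) (Φ : Matrix (Fin t) (Fin t) ℝ → ℝ) : Prop :=
  (∀ lam : ℝ, 0 ≤ lam → lam ≤ 1 → ∀ M N : Matrix (Fin t) (Fin t) ℝ,
      M.IsHermitian → N.IsHermitian →
      lam * Φ M + (1 - lam) * Φ N ≤ Φ (lam • M + (1 - lam) • N)) ∧
  (∀ (σ : Equiv.Perm (Fin t)) (M : Matrix (Fin t) (Fin t) ℝ),
      Φ ((permMat t σ)ᵀ * M * permMat t σ) = Φ M) ∧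
  (∀ M : Matrix (Fin t) (Fin t) ℝ, M.PosSemidef →
      ∀ b c : ℝ, 0 < b → b ≤ c → Φ (b • M) ≤ Φ (c • M))

/-- `P` is φ₁-universally optimal: `Φ(C(P)) ≥ Φ(C(Q))` for every design `Q` and
every optimality criterion `Φ`. -/
def IsUnivOptimal (p t n : ℕ) (a : ℕ → ℝ) (P : (Fin p → Fin t) → ℝ) : Prop :=
  ∀ Φ : Matrix (Fin t) (Fin t) ℝ → ℝ, IsCriterion t Φ →
    ∀ Q : (Fin p → Fin t) → ℝ, IsDesign Q →
      ∀ WP WQ : Matrix (Fin t) (Fin t) ℝ,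
        IsGInv (C22 p t n a P) WP → IsGInv (C22 p t n a Q) WQ →
          Φ (CInfo p t n a Q WQ) ≤ Φ (CInfo p t n a P WP)

/-- `q_{s,11} = tr(B_t T_s' A T_s B_t)`. -/
def q11 (p t n : ℕ) (a : ℕ → ℝ) (s : Fin p → Fin t) : ℝ :=
  (Bsq t * (Tmat s)ᵀ * Amat p n a * Tmat s * Bsq t).trace

/-- `q_{s,12} = tr(B_t T_s' A F_s B_t)`. -/
def q12 (p t n : ℕ) (a : ℕ → ℝ) (s : Fin p → Fin t) : ℝ :=
  (Bsq t * (Tmat s)ᵀ * Amat p n a * Fmat s * Bsq t).trace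

/-- `q_{s,22} = tr(B_t F_s' A F_s B_t)`. -/
def q22 (p t n : ℕ) (a : ℕ → ℝ) (s : Fin p → Fin t) : ℝ :=
  (Bsq t * (Fmat s)ᵀ * Amat p n a * Fmat s * Bsq t).trace

/-- The quadratic `q_s(x) = q_{s,11} + 2 q_{s,12} x + q_{s,22} x²`. -/
def qfun (p t n : ℕ) (a : ℕ → ℝ) (s : Fin p → Fin t) (x : ℝ) : ℝ :=
  q11 p t n a s + 2 * q12 p t n a s * x + q22 p t n a s * x ^ 2

/-- `min_x ∑_s p_s q_s(x)`. -/
def qmin (p t n : ℕ) (a : ℕ → ℝ) (P : (Fin p → Fin t) → ℝ) : ℝ :=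
  sInf (Set.range fun x : ℝ => ∑ s, P s * qfun p t n a s x)

/-- `y* = max_P min_x ∑_s p_s q_s(x)`, the maximum over all approximate designs. -/
def ystar (p t n : ℕ) (a : ℕ → ℝ) : ℝ :=
  sSup {y : ℝ | ∃ P : (Fin p → Fin t) → ℝ, IsDesign P ∧ y = qmin p t n a P}
namespace ThmAux

lemma sum_ite_lt_fin (p k : ℕ) (hk : k ≤ p) (f : ℕ → ℝ) :
    ∑ b : Fin p, (if (b : ℕ) < k then f b else 0) = ∑ x ∈ Finset.range k, f x := by
  rw [Fin.sum_univ_eq_sum_range (fun x => if x < k then f x else 0)]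
  rw [← Finset.sum_subset (Finset.range_subset_range.2 hk)
    (by intro x hx hxk; simp only [Finset.mem_range] at hxk ⊢; rw [if_neg (by omega)])]
  exact Finset.sum_congr rfl (by intro x hx; rw [if_pos (Finset.mem_range.1 hx)])

lemma delta_range_key (k : ℕ) (ai bi : ℕ) (ha : ai < k) (hb : bi < k) :
    ∑ x ∈ Finset.range k, ((if ai = x then (1:ℝ) else 0) - 1/(k:ℝ)) * ((if x = bi then 1 else 0) - 1/(k:ℝ))
      = (if ai = bi then 1 else 0) - 1/(k:ℝ) := by
  have hk : 0 < k := by omega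
  have e1 : ∑ x ∈ Finset.range k, (if ai = x then (1:ℝ) else 0) = 1 := by
    rw [Finset.sum_ite_eq (Finset.range k) ai (fun _ => (1:ℝ))]
    simp [Finset.mem_range.2 ha]
  have e2 : ∑ x ∈ Finset.range k, (if x = bi then (1:ℝ) else 0) = 1 := by
    rw [Finset.sum_ite_eq' (Finset.range k) bi (fun _ => (1:ℝ))]
    simp [Finset.mem_range.2 hb]
  have e3 : ∑ x ∈ Finset.range k, (if ai = x then (1:ℝ) else 0) * (if x = bi then 1 else 0)
      = if ai = bi then 1 else 0 := by
    have : ∀ x ∈ Finset.range k, (if ai = x then (1:ℝ) else 0) * (if x = bi then 1 else 0)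
        = if ai = x then (if x = bi then (1:ℝ) else 0) else 0 := by
      intro x _; by_cases h : ai = x <;> simp [h]
    rw [Finset.sum_congr rfl this, Finset.sum_ite_eq (Finset.range k) ai
      (fun x => if x = bi then (1:ℝ) else 0)]
    simp [Finset.mem_range.2 ha]
  have expand : ∀ x ∈ Finset.range k,
      ((if ai = x then (1:ℝ) else 0) - 1/(k:ℝ)) * ((if x = bi then 1 else 0) - 1/(k:ℝ))
      = (if ai = x then (1:ℝ) else 0) * (if x = bi then 1 else 0)
        - (if ai = x then (1:ℝ) else 0) * (1/(k:ℝ))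
        - (1/(k:ℝ)) * (if x = bi then (1:ℝ) else 0) + (1/(k:ℝ)) * (1/(k:ℝ)) := by
    intro x _; ring
  rw [Finset.sum_congr rfl expand]
  rw [Finset.sum_add_distrib, Finset.sum_sub_distrib, Finset.sum_sub_distrib,
    ← Finset.sum_mul, ← Finset.mul_sum, e1, e2, e3, Finset.sum_const, Finset.card_range]
  have : (k:ℝ) ≠ 0 := Nat.cast_ne_zero.2 (by omega)
  have hk' : (k:ℝ) * (1/(k:ℝ) * (1/(k:ℝ))) = 1/(k:ℝ) := by
    rw [← mul_assoc, mul_one_div_cancel this, one_mul]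
  rw [nsmul_eq_mul, hk']
  ring

lemma sum_delta_fin {p : ℕ} (a : Fin p) (f : Fin p → ℝ) :
    ∑ b : Fin p, (if (a : ℕ) = (b : ℕ) then f b else 0) = f a := by
  have h : ∀ b : Fin p, ((a : ℕ) = (b : ℕ)) ↔ b = a := by
    intro b; constructor
    · intro h; exact Fin.ext h.symm
    · intro h; rw [h]
  simp only [h]
  simp

lemma Bblock_transpose (m q : ℕ) : (Bblock m q q)ᵀ = Bblock m q q := by
  ext a b
  simp only [Matrix.transpose_apply, Bblock, Matrix.of_apply]
  by_cases h1 : (a:ℕ) < m <;> by_cases h2 : (b:ℕ) < m <;>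
    simp [h1, h2, eq_comm, and_comm]

lemma Bblock_rowsum {p : ℕ} (k : ℕ) (hk : k ≤ p) (a : Fin p) :
    ∑ b, Bblock k p p a b = 0 := by
  simp only [Bblock, Matrix.of_apply]
  by_cases ha : (a:ℕ) < k
  · have hk1 : 0 < k := by omega
    have : ∀ b : Fin p, (if (a:ℕ) < k ∧ (b:ℕ) < k then (if (a:ℕ) = (b:ℕ) then (1:ℝ) else 0) - 1/(k:ℝ) else 0)
        = (if (b:ℕ) < k then ((if (a:ℕ) = (b:ℕ) then (1:ℝ) else 0) - 1/(k:ℝ)) else 0) := by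
      intro b; by_cases hb : (b:ℕ) < k <;> simp [ha, hb]
    rw [Finset.sum_congr rfl (fun b _ => this b)]
    rw [sum_ite_lt_fin p k hk (fun x => (if (a:ℕ) = x then (1:ℝ) else 0) - 1/(k:ℝ))]
    rw [Finset.sum_sub_distrib, Finset.sum_ite_eq (Finset.range k) (a:ℕ) (fun _ => (1:ℝ))]
    simp only [Finset.mem_range.2 ha, if_pos, Finset.sum_const, Finset.card_range, nsmul_eq_mul]
    have : (k:ℝ) ≠ 0 := Nat.cast_ne_zero.2 (by omega)
    field_simp
    norm_num
  · have : ∀ b : Fin p, (if (a:ℕ) < k ∧ (b:ℕ) < k then (if (a:ℕ) = (b:ℕ) then (1:ℝ) else 0) - 1/(k:ℝ) else 0) = 0 := by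
      intro b; simp [ha]
    rw [Finset.sum_congr rfl (fun b _ => this b)]; simp

lemma Bblock_colsum {p : ℕ} (k : ℕ) (hk : k ≤ p) (b : Fin p) :
    ∑ a, Bblock k p p a b = 0 := by
  have h := Bblock_rowsum (p := p) k hk b
  rw [← h]
  apply Finset.sum_congr rfl
  intro x _
  have := congrFun (congrFun (Bblock_transpose k p) b) x
  simpa [Matrix.transpose_apply] using this

lemma Bblock_idem {p : ℕ} (k : ℕ) (hk : k ≤ p) :
    Bblock k p p * Bblock k p p = Bblock k p p := by
  ext a b
  simp only [Matrix.mul_apply, Bblock, Matrix.of_apply]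
  by_cases ha : (a:ℕ) < k
  · by_cases hb : (b:ℕ) < k
    · have : ∀ c : Fin p,
          (if (a:ℕ) < k ∧ (c:ℕ) < k then (if (a:ℕ) = (c:ℕ) then (1:ℝ) else 0) - 1/(k:ℝ) else 0) *
          (if (c:ℕ) < k ∧ (b:ℕ) < k then (if (c:ℕ) = (b:ℕ) then (1:ℝ) else 0) - 1/(k:ℝ) else 0)
          = if (c:ℕ) < k then ((if (a:ℕ) = (c:ℕ) then (1:ℝ) else 0) - 1/(k:ℝ)) * ((if (c:ℕ) = (b:ℕ) then (1:ℝ) else 0) - 1/(k:ℝ)) else 0 := by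
        intro c; by_cases hc : (c:ℕ) < k <;> simp [ha, hb, hc]
      rw [Finset.sum_congr rfl (fun c _ => this c),
        sum_ite_lt_fin p k hk (fun x => ((if (a:ℕ) = x then (1:ℝ) else 0) - 1/(k:ℝ)) * ((if x = (b:ℕ) then (1:ℝ) else 0) - 1/(k:ℝ))),
        delta_range_key k (a:ℕ) (b:ℕ) ha hb]
      simp [ha, hb]
    · have : ∀ c : Fin p,
          (if (a:ℕ) < k ∧ (c:ℕ) < k then (if (a:ℕ) = (c:ℕ) then (1:ℝ) else 0) - 1/(k:ℝ) else 0) *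
          (if (c:ℕ) < k ∧ (b:ℕ) < k then (if (c:ℕ) = (b:ℕ) then (1:ℝ) else 0) - 1/(k:ℝ) else 0) = 0 := by
        intro c; simp [hb]
      rw [Finset.sum_congr rfl (fun c _ => this c)]; simp [hb]
  · have : ∀ c : Fin p,
        (if (a:ℕ) < k ∧ (c:ℕ) < k then (if (a:ℕ) = (c:ℕ) then (1:ℝ) else 0) - 1/(k:ℝ) else 0) *
        (if (c:ℕ) < k ∧ (b:ℕ) < k then (if (c:ℕ) = (b:ℕ) then (1:ℝ) else 0) - 1/(k:ℝ) else 0) = 0 := by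
      intro c; simp [ha]
    rw [Finset.sum_congr rfl (fun c _ => this c)]; simp [ha]

lemma pow_sub_pow_le (m : ℕ) {c d : ℝ} (h0 : 0 ≤ c) (hcd : c ≤ d) (hd : d ≤ 1) :
    d^m - c^m ≤ m*(d-c) := by
  induction m with
  | zero => simp
  | succ m ih =>
    have h1 : c^m ≤ d^m := pow_le_pow_left₀ h0 hcd m
    have h2 : c^m ≤ 1 := pow_le_one₀ h0 (le_trans hcd hd)
    have h3 : 0 ≤ c^m := pow_nonneg h0 m
    have hd0 : 0 ≤ d := le_trans h0 hcd
    have : d^(m+1) - c^(m+1) = d*(d^m - c^m) + (d-c)*c^m := by ring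
    rw [this]
    push_cast
    nlinarith [mul_le_mul_of_nonneg_left ih hd0]

lemma pow_sub_pow_lt (m : ℕ) (hm : 2 ≤ m) {c d : ℝ} (h0 : 0 ≤ c) (hcd : c < d) (hd : d ≤ 1) :
    d^m - c^m < m*(d-c) := by
  induction m with
  | zero => omega
  | succ m ih =>
    rcases Nat.lt_or_ge m 2 with h2 | h2
    · interval_cases m
      · omega
      · push_cast; nlinarith
    · have ih' := ih h2
      have h1 : c^m ≤ d^m := pow_le_pow_left₀ h0 hcd.le m
      have h3 : 0 ≤ c^m := pow_nonneg h0 m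
      have h2' : c^m ≤ 1 := pow_le_one₀ h0 (le_trans hcd.le hd)
      have hd0 : 0 < d := lt_of_le_of_lt h0 hcd
      have key : d^(m+1) - c^(m+1) = d*(d^m - c^m) + (d-c)*c^m := by ring
      rw [key]
      push_cast
      nlinarith [mul_lt_mul_of_pos_left ih' hd0]

section coeffs
variable {p n : ℕ} {a : ℕ → ℝ}

lemma aInt_facts (ha0 : ∀ k ∈ Finset.Icc 1 p, 0 ≤ a k)
    (hsum : ∑ k ∈ Finset.Icc 1 p, a k = 1) {k : ℕ} (hk1 : 1 ≤ k) (hkp : k ≤ p) :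
    0 ≤ aInt a 1 (k-1) ∧ aInt a 1 k = aInt a 1 (k-1) + a k ∧ aInt a 1 k ≤ 1 := by
  obtain ⟨m, rfl⟩ : ∃ m, k = m + 1 := ⟨k - 1, by omega⟩
  refine ⟨?_, ?_, ?_⟩
  · exact Finset.sum_nonneg (fun i hi => ha0 i (Finset.mem_Icc.1 hi |> fun h => Finset.mem_Icc.2 ⟨h.1, by omega⟩))
  · simp only [Nat.add_sub_cancel, aInt]
    exact Finset.sum_Icc_succ_top (by omega) a
  · rw [← hsum]
    apply Finset.sum_le_sum_of_subset_of_nonneg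
    · exact Finset.Icc_subset_Icc_right hkp
    · intro i hi _; exact ha0 i hi

lemma alpha_nonneg (hn : 1 ≤ n) (ha0 : ∀ k ∈ Finset.Icc 1 p, 0 ≤ a k)
    (hsum : ∑ k ∈ Finset.Icc 1 p, a k = 1) {k : ℕ} (hk1 : 1 ≤ k) (hkp : k ≤ p) :
    0 ≤ alphaCoef n a k := by
  obtain ⟨hc0, hd, hd1⟩ := aInt_facts ha0 hsum hk1 hkp
  set c := aInt a 1 (k-1)
  set d := aInt a 1 k
  have hak : 0 ≤ a k := ha0 k (Finset.mem_Icc.2 ⟨hk1, hkp⟩)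
  have hcd : c ≤ d := by rw [hd]; linarith
  have h := pow_sub_pow_le (n+1) hc0 hcd hd1
  unfold alphaCoef
  apply div_nonneg _ (Nat.cast_nonneg n)
  have h' : d^(n+1) - c^(n+1) ≤ ((n:ℝ)+1)*(d-c) := by push_cast at h ⊢; linarith
  have hdc : d - c = a k := by rw [hd]; ring
  rw [hdc] at h'
  linarith

lemma alpha_pos (hn : 1 ≤ n) (ha0 : ∀ k ∈ Finset.Icc 1 p, 0 ≤ a k)
    (hsum : ∑ k ∈ Finset.Icc 1 p, a k = 1) {k : ℕ} (hk1 : 1 ≤ k) (hkp : k ≤ p)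
    (hak : 0 < a k) : 0 < alphaCoef n a k := by
  obtain ⟨hc0, hd, hd1⟩ := aInt_facts ha0 hsum hk1 hkp
  set c := aInt a 1 (k-1)
  set d := aInt a 1 k
  have hcd : c < d := by rw [hd]; linarith
  have h := pow_sub_pow_lt (n+1) (by omega) hc0 hcd hd1
  unfold alphaCoef
  apply div_pos _ (by exact_mod_cast Nat.pos_of_ne_zero (by omega))
  have h' : d^(n+1) - c^(n+1) < ((n:ℝ)+1)*(d-c) := by push_cast at h ⊢; linarith
  have hdc : d - c = a k := by rw [hd]; ring
  rw [hdc] at h'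
  linarith

end coeffs

end ThmAux
namespace ThmAux

section matrices
variable {p t n : ℕ} {a : ℕ → ℝ}

lemma Amat_transpose : (Amat p n a)ᵀ = Amat p n a := by
  unfold Amat
  rw [Matrix.transpose_sum]
  exact Finset.sum_congr rfl (fun k _ => by rw [Matrix.transpose_smul, Bblock_transpose])

lemma Bmat_transpose : (Bmat p n a)ᵀ = Bmat p n a := by
  unfold Bmat
  rw [Matrix.transpose_sum]
  exact Finset.sum_congr rfl (fun k _ => by rw [Matrix.transpose_smul, Bblock_transpose])

lemma sumB_rowsum (co : ℕ → ℝ) (i : Fin p) :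
    ∑ j, (∑ k ∈ Finset.Icc 1 p, co k • Bblock k p p) i j = 0 := by
  have : ∀ j, (∑ k ∈ Finset.Icc 1 p, co k • Bblock k p p) i j
      = ∑ k ∈ Finset.Icc 1 p, co k * Bblock k p p i j := by
    intro j; rw [Matrix.sum_apply]
    exact Finset.sum_congr rfl (fun k _ => by rw [Matrix.smul_apply, smul_eq_mul])
  rw [Finset.sum_congr rfl (fun j _ => this j), Finset.sum_comm]
  apply Finset.sum_eq_zero
  intro k hk
  rw [← Finset.mul_sum, Bblock_rowsum k (Finset.mem_Icc.1 hk).2 i, mul_zero]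

lemma sumB_colsum (co : ℕ → ℝ) (j : Fin p) :
    ∑ i, (∑ k ∈ Finset.Icc 1 p, co k • Bblock k p p) i j = 0 := by
  have : ∀ i, (∑ k ∈ Finset.Icc 1 p, co k • Bblock k p p) i j
      = ∑ k ∈ Finset.Icc 1 p, co k * Bblock k p p i j := by
    intro i; rw [Matrix.sum_apply]
    exact Finset.sum_congr rfl (fun k _ => by rw [Matrix.smul_apply, smul_eq_mul])
  rw [Finset.sum_congr rfl (fun i _ => this i), Finset.sum_comm]
  apply Finset.sum_eq_zero
  intro k hk
  rw [← Finset.mul_sum, Bblock_colsum k (Finset.mem_Icc.1 hk).2 j, mul_zero]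

lemma Amat_rowsum (i : Fin p) : ∑ j, Amat p n a i j = 0 := sumB_rowsum _ i
lemma Amat_colsum (j : Fin p) : ∑ i, Amat p n a i j = 0 := sumB_colsum _ j
lemma Bmat_rowsum (i : Fin p) : ∑ j, Bmat p n a i j = 0 := sumB_rowsum _ i
lemma Bmat_colsum (j : Fin p) : ∑ i, Bmat p n a i j = 0 := sumB_colsum _ j

lemma Tmat_rowsum (s : Fin p → Fin t) (k : Fin p) : ∑ i, Tmat s k i = 1 := by
  simp [Tmat]

lemma Fmat_rowsum (s : Fin p → Fin t) (k : Fin p) :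
    ∑ i, Fmat s k i = if (k:ℕ) = 0 then 0 else 1 := by
  by_cases h : (k:ℕ) = 0 <;> simp [Fmat, h]

lemma Tmat_perm (σ : Equiv.Perm (Fin t)) (s : Fin p → Fin t) (k : Fin p) (i : Fin t) :
    Tmat (fun k => σ (s k)) k (σ i) = Tmat s k i := by
  simp only [Tmat, Matrix.of_apply, EmbeddingLike.apply_eq_iff_eq]

lemma Fmat_perm (σ : Equiv.Perm (Fin t)) (s : Fin p → Fin t) (k : Fin p) (i : Fin t) :
    Fmat (fun k => σ (s k)) k (σ i) = Fmat s k i := by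
  simp only [Fmat, Matrix.of_apply, EmbeddingLike.apply_eq_iff_eq]

lemma Bsq_apply (ht : 1 ≤ t) (i j : Fin t) :
    Bsq t i j = (if (i:ℕ) = (j:ℕ) then 1 else 0) - 1/(t:ℝ) := by
  simp [Bsq, Bblock, i.isLt, j.isLt]

lemma Bsq_colsum (j : Fin t) : ∑ i, Bsq t i j = 0 := Bblock_colsum t le_rfl j

lemma Bsq_rowsum (i : Fin t) : ∑ j, Bsq t i j = 0 := Bblock_rowsum t le_rfl i

lemma Bsq_transpose : (Bsq t)ᵀ = Bsq t := Bblock_transpose t t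

lemma Bsq_idem : Bsq t * Bsq t = Bsq t := Bblock_idem t le_rfl

lemma Bsq_trace (ht : 1 ≤ t) : (Bsq t).trace = (t:ℝ) - 1 := by
  have htR : (t:ℝ) ≠ 0 := Nat.cast_ne_zero.2 (by omega)
  simp only [Matrix.trace, Matrix.diag]
  rw [Finset.sum_congr rfl (fun i (_ : i ∈ Finset.univ) => Bsq_apply ht i i)]
  simp [Finset.card_univ]
  field_simp

lemma Tmat_mul_apply (s : Fin p → Fin t) (X : Matrix (Fin t) (Fin t) ℝ) (k : Fin p) (j : Fin t) :
    (Tmat s * X) k j = X (s k) j := by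
  rw [Matrix.mul_apply]
  simp [Tmat]

lemma Fmat_mul_apply (s : Fin p → Fin t) (X : Matrix (Fin t) (Fin t) ℝ) (k : Fin p) (j : Fin t) :
    (Fmat s * X) k j = if h : (k:ℕ) = 0 then 0
      else X (s ⟨(k:ℕ) - 1, lt_of_le_of_lt (Nat.sub_le _ _) k.isLt⟩) j := by
  rw [Matrix.mul_apply]
  by_cases h : (k:ℕ) = 0 <;> simp [Fmat, h]

end matrices
end ThmAux
namespace ThmAux

section sym
variable {p t n : ℕ} {a : ℕ → ℝ} {P : (Fin p → Fin t) → ℝ}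

lemma sum_perm_apply (hPsym : IsSymmetricDesign P)
    (σ : Equiv.Perm (Fin t)) (h : (Fin p → Fin t) → ℝ) :
    ∑ s, P s * h (fun k => σ (s k)) = ∑ s, P s * h s := by
  have := Equiv.sum_comp (Equiv.piCongrRight (fun _ : Fin p => σ))
    (fun s : Fin p → Fin t => P s * h s)
  rw [← this]
  apply Finset.sum_congr rfl
  intro s _
  have hs : P (fun k => σ (s k)) = P s := hPsym σ s
  have : (Equiv.piCongrRight (fun _ : Fin p => σ)) s = fun k => σ (s k) := rfl
  rw [this, hs]

lemma Tmarg (ht : 1 ≤ t) (hP : IsDesign P) (hPsym : IsSymmetricDesign P)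
    (k : Fin p) (i : Fin t) :
    ∑ s, P s * Tmat s k i = 1/(t:ℝ) := by
  have key : ∀ i' : Fin t, ∑ s, P s * Tmat s k i' = ∑ s, P s * Tmat s k i := by
    intro i'
    have h := sum_perm_apply hPsym (Equiv.swap i i') (fun s => Tmat s k i')
    have e : ∀ s : Fin p → Fin t,
        Tmat (fun k => Equiv.swap i i' (s k)) k i' = Tmat s k i := by
      intro s
      simp only [Tmat, Matrix.of_apply, Equiv.swap_apply_eq_iff, Equiv.swap_apply_right]
    rw [Finset.sum_congr rfl (fun s _ => by rw [e s])] at h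
    exact h.symm
  have tot : ∑ i' : Fin t, ∑ s, P s * Tmat s k i' = 1 := by
    rw [Finset.sum_comm]
    calc ∑ s, ∑ i' : Fin t, P s * Tmat s k i' = ∑ s, P s := by
          apply Finset.sum_congr rfl; intro s _
          rw [← Finset.mul_sum, Tmat_rowsum, mul_one]
      _ = 1 := hP.2
  rw [Finset.sum_congr rfl (fun i' _ => key i'), Finset.sum_const, Finset.card_univ,
    Fintype.card_fin, nsmul_eq_mul] at tot
  have htR : (t:ℝ) ≠ 0 := Nat.cast_ne_zero.2 (by omega)
  field_simp at tot ⊢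
  linarith

lemma Tbar_apply (ht : 1 ≤ t) (hP : IsDesign P) (hPsym : IsSymmetricDesign P)
    (k : Fin p) (i : Fin t) : Tbar P k i = 1/(t:ℝ) := by
  unfold Tbar
  rw [Matrix.sum_apply]
  rw [Finset.sum_congr rfl (fun s (_ : s ∈ Finset.univ) => by
    rw [Matrix.smul_apply, smul_eq_mul])]
  exact Tmarg ht hP hPsym k i

lemma Fbar_apply (ht : 1 ≤ t) (hP : IsDesign P) (hPsym : IsSymmetricDesign P)
    (k : Fin p) (i : Fin t) :
    Fbar P k i = if (k:ℕ) = 0 then 0 else 1/(t:ℝ) := by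
  unfold Fbar
  rw [Matrix.sum_apply]
  rw [Finset.sum_congr rfl (fun s (_ : s ∈ Finset.univ) => by
    rw [Matrix.smul_apply, smul_eq_mul])]
  by_cases h : (k:ℕ) = 0
  · rw [if_pos h]
    apply Finset.sum_eq_zero
    intro s _
    simp [Fmat, h]
  · rw [if_neg h]
    have : ∀ s : Fin p → Fin t, Fmat s k i
        = Tmat s ⟨(k:ℕ)-1, lt_of_le_of_lt (Nat.sub_le _ _) k.isLt⟩ i := by
      intro s; simp [Fmat, Tmat, h]
    rw [Finset.sum_congr rfl (fun s _ => by rw [this s])]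
    exact Tmarg ht hP hPsym _ i

lemma conj_entry_perm {σ : Equiv.Perm (Fin t)} {i j : Fin t}
    {U U' V V' : Matrix (Fin p) (Fin t) ℝ} (X : Matrix (Fin p) (Fin p) ℝ)
    (hU : ∀ k, U' k (σ i) = U k i) (hV : ∀ k, V' k (σ j) = V k j) :
    (U'ᵀ * X * V') (σ i) (σ j) = (Uᵀ * X * V) i j := by
  simp only [Matrix.mul_apply, Matrix.transpose_apply]
  apply Finset.sum_congr rfl
  intro l _
  rw [hV l]
  congr 1
  exact Finset.sum_congr rfl (fun k _ => by rw [hU k])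

lemma conj_entry_const {U V : Matrix (Fin p) (Fin t) ℝ} (X : Matrix (Fin p) (Fin p) ℝ)
    (u v : Fin p → ℝ) (hU : ∀ k x, U k x = u k) (hV : ∀ k x, V k x = v k)
    (x y x' y' : Fin t) : (Uᵀ * X * V) x y = (Uᵀ * X * V) x' y' := by
  simp only [Matrix.mul_apply, Matrix.transpose_apply]
  apply Finset.sum_congr rfl
  intro l _
  rw [hV l, hV l]
  congr 1
  exact Finset.sum_congr rfl (fun k _ => by rw [hU k, hU k])

end sym
end ThmAux
namespace ThmAux

section centry
variable {p t n : ℕ} {a : ℕ → ℝ} {P : (Fin p → Fin t) → ℝ}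

lemma C11_apply (x y : Fin t) : C11 p t n a P x y
    = (n:ℝ) * ((∑ s, P s * ((Tmat s)ᵀ * Amat p n a * Tmat s) x y)
      - ((Tbar P)ᵀ * Bmat p n a * Tbar P) x y) := by
  unfold C11
  simp [Matrix.smul_apply, Matrix.sub_apply, Matrix.sum_apply, smul_eq_mul]

lemma C12_apply (x y : Fin t) : C12 p t n a P x y
    = (n:ℝ) * ((∑ s, P s * ((Tmat s)ᵀ * Amat p n a * Fmat s) x y)
      - ((Tbar P)ᵀ * Bmat p n a * Fbar P) x y) := by
  unfold C12
  simp [Matrix.smul_apply, Matrix.sub_apply, Matrix.sum_apply, smul_eq_mul]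

lemma C22_apply (x y : Fin t) : C22 p t n a P x y
    = (n:ℝ) * ((∑ s, P s * ((Fmat s)ᵀ * Amat p n a * Fmat s) x y)
      - ((Fbar P)ᵀ * Bmat p n a * Fbar P) x y) := by
  unfold C22
  simp [Matrix.smul_apply, Matrix.sub_apply, Matrix.sum_apply, smul_eq_mul]

lemma rowsum_conj_one {U V : Matrix (Fin p) (Fin t) ℝ} {X : Matrix (Fin p) (Fin p) ℝ}
    (hV : ∀ l, ∑ j, V l j = 1) (hX : ∀ k, ∑ l, X k l = 0) (i : Fin t) :
    ∑ j, (Uᵀ * X * V) i j = 0 := by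
  simp only [Matrix.mul_apply, Matrix.transpose_apply]
  rw [Finset.sum_comm]
  rw [Finset.sum_congr rfl (fun l (_ : l ∈ Finset.univ) => by
    rw [← Finset.mul_sum, hV l, mul_one])]
  rw [Finset.sum_comm]
  apply Finset.sum_eq_zero; intro k _
  rw [← Finset.mul_sum, hX k, mul_zero]

lemma rowsum_conj_F (hp0 : 0 < p) {U V : Matrix (Fin p) (Fin t) ℝ}
    {X : Matrix (Fin p) (Fin p) ℝ}
    (hV : ∀ l : Fin p, ∑ j, V l j = (if (l:ℕ) = 0 then 0 else 1))
    (hX : ∀ k, ∑ l, X k l = 0) (i : Fin t) :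
    ∑ j, (Uᵀ * X * V) i j = -∑ k, U k i * X k ⟨0, hp0⟩ := by
  simp only [Matrix.mul_apply, Matrix.transpose_apply]
  rw [Finset.sum_comm]
  rw [Finset.sum_congr rfl (fun l (_ : l ∈ Finset.univ) => by
    rw [← Finset.mul_sum, hV l])]
  have hsplit : ∀ l : Fin p, (∑ k, U k i * X k l) * (if (l:ℕ) = 0 then (0:ℝ) else 1)
      = (∑ k, U k i * X k l) - (if l = ⟨0, hp0⟩ then (∑ k, U k i * X k l) else 0) := by
    intro l
    have : ((l:ℕ) = 0) ↔ l = ⟨0, hp0⟩ := by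
      constructor
      · intro h; exact Fin.ext h
      · intro h; rw [h]
    by_cases h : (l:ℕ) = 0
    · rw [if_pos h, if_pos (this.1 h)]; ring
    · rw [if_neg h, if_neg (fun hh => h (this.2 hh))]; ring
  rw [Finset.sum_congr rfl (fun l _ => hsplit l), Finset.sum_sub_distrib]
  rw [Finset.sum_ite_eq' Finset.univ (⟨0, hp0⟩ : Fin p) (fun l => ∑ k, U k i * X k l)]
  simp only [Finset.mem_univ, if_pos]
  have : ∑ l, ∑ k, U k i * X k l = 0 := by
    rw [Finset.sum_comm]
    apply Finset.sum_eq_zero; intro k _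
    rw [← Finset.mul_sum, hX k, mul_zero]
  rw [this]; ring

lemma colsum_conj {U V : Matrix (Fin p) (Fin t) ℝ} {X : Matrix (Fin p) (Fin p) ℝ}
    (hU : ∀ k, ∑ i, U k i = 1) (hX : ∀ l, ∑ k, X k l = 0) (j : Fin t) :
    ∑ i, (Uᵀ * X * V) i j = 0 := by
  simp only [Matrix.mul_apply, Matrix.transpose_apply]
  rw [Finset.sum_comm]
  apply Finset.sum_eq_zero; intro l _
  rw [← Finset.sum_mul]
  have : ∑ i, ∑ k, U k i * X k l = 0 := by
    rw [Finset.sum_comm]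
    rw [Finset.sum_congr rfl (fun k (_ : k ∈ Finset.univ) => by
      rw [← Finset.sum_mul, hU k, one_mul])]
    exact hX l
  rw [this, zero_mul]

lemma Tbar_rowsum (hP : IsDesign P) (l : Fin p) : ∑ j, Tbar P l j = 1 := by
  unfold Tbar
  simp only [Matrix.sum_apply, Matrix.smul_apply, smul_eq_mul]
  rw [Finset.sum_comm]
  have h1 : ∀ s : Fin p → Fin t, ∑ j, P s * Tmat s l j = P s := by
    intro s; rw [← Finset.mul_sum, Tmat_rowsum, mul_one]
  rw [Finset.sum_congr rfl (fun s _ => h1 s)]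
  exact hP.2

lemma Fbar_rowsum (hP : IsDesign P) (l : Fin p) :
    ∑ j, Fbar P l j = if (l:ℕ) = 0 then 0 else 1 := by
  unfold Fbar
  simp only [Matrix.sum_apply, Matrix.smul_apply, smul_eq_mul]
  rw [Finset.sum_comm]
  have h1 : ∀ s : Fin p → Fin t, ∑ j, P s * Fmat s l j
      = P s * (if (l:ℕ) = 0 then 0 else 1) := by
    intro s; rw [← Finset.mul_sum, Fmat_rowsum]
  rw [Finset.sum_congr rfl (fun s _ => h1 s), ← Finset.sum_mul, hP.2, one_mul]

end centry
end ThmAux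
namespace ThmAux

section csec
variable {p t n : ℕ} {a : ℕ → ℝ} {P : (Fin p → Fin t) → ℝ}

lemma C11_perm (ht : 1 ≤ t) (hP : IsDesign P) (hPsym : IsSymmetricDesign P)
    (σ : Equiv.Perm (Fin t)) (i j : Fin t) :
    C11 p t n a P (σ i) (σ j) = C11 p t n a P i j := by
  rw [C11_apply, C11_apply]
  have h1 : ∑ s, P s * ((Tmat s)ᵀ * Amat p n a * Tmat s) (σ i) (σ j)
      = ∑ s, P s * ((Tmat s)ᵀ * Amat p n a * Tmat s) i j := by
    rw [← sum_perm_apply hPsym σ (fun s => ((Tmat s)ᵀ * Amat p n a * Tmat s) (σ i) (σ j))]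
    apply Finset.sum_congr rfl; intro s _
    congr 1
    exact conj_entry_perm (Amat p n a) (fun k => Tmat_perm σ s k i)
      (fun k => Tmat_perm σ s k j)
  have h2 : ((Tbar P)ᵀ * Bmat p n a * Tbar P) (σ i) (σ j)
      = ((Tbar P)ᵀ * Bmat p n a * Tbar P) i j :=
    conj_entry_const (Bmat p n a) (fun _ => 1/(t:ℝ)) (fun _ => 1/(t:ℝ))
      (fun k x => Tbar_apply ht hP hPsym k x) (fun k x => Tbar_apply ht hP hPsym k x)
      (σ i) (σ j) i j
  rw [h1, h2]

lemma C12_perm (ht : 1 ≤ t) (hP : IsDesign P) (hPsym : IsSymmetricDesign P)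
    (σ : Equiv.Perm (Fin t)) (i j : Fin t) :
    C12 p t n a P (σ i) (σ j) = C12 p t n a P i j := by
  rw [C12_apply, C12_apply]
  have h1 : ∑ s, P s * ((Tmat s)ᵀ * Amat p n a * Fmat s) (σ i) (σ j)
      = ∑ s, P s * ((Tmat s)ᵀ * Amat p n a * Fmat s) i j := by
    rw [← sum_perm_apply hPsym σ (fun s => ((Tmat s)ᵀ * Amat p n a * Fmat s) (σ i) (σ j))]
    apply Finset.sum_congr rfl; intro s _
    congr 1
    exact conj_entry_perm (Amat p n a) (fun k => Tmat_perm σ s k i)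
      (fun k => Fmat_perm σ s k j)
  have h2 : ((Tbar P)ᵀ * Bmat p n a * Fbar P) (σ i) (σ j)
      = ((Tbar P)ᵀ * Bmat p n a * Fbar P) i j :=
    conj_entry_const (Bmat p n a) (fun _ => 1/(t:ℝ))
      (fun k => if (k:ℕ) = 0 then 0 else 1/(t:ℝ))
      (fun k x => Tbar_apply ht hP hPsym k x) (fun k x => Fbar_apply ht hP hPsym k x)
      (σ i) (σ j) i j
  rw [h1, h2]

lemma C22_perm (ht : 1 ≤ t) (hP : IsDesign P) (hPsym : IsSymmetricDesign P)
    (σ : Equiv.Perm (Fin t)) (i j : Fin t) :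
    C22 p t n a P (σ i) (σ j) = C22 p t n a P i j := by
  rw [C22_apply, C22_apply]
  have h1 : ∑ s, P s * ((Fmat s)ᵀ * Amat p n a * Fmat s) (σ i) (σ j)
      = ∑ s, P s * ((Fmat s)ᵀ * Amat p n a * Fmat s) i j := by
    rw [← sum_perm_apply hPsym σ (fun s => ((Fmat s)ᵀ * Amat p n a * Fmat s) (σ i) (σ j))]
    apply Finset.sum_congr rfl; intro s _
    congr 1
    exact conj_entry_perm (Amat p n a) (fun k => Fmat_perm σ s k i)
      (fun k => Fmat_perm σ s k j)
  have h2 : ((Fbar P)ᵀ * Bmat p n a * Fbar P) (σ i) (σ j)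
      = ((Fbar P)ᵀ * Bmat p n a * Fbar P) i j :=
    conj_entry_const (Bmat p n a) (fun k => if (k:ℕ) = 0 then 0 else 1/(t:ℝ))
      (fun k => if (k:ℕ) = 0 then 0 else 1/(t:ℝ))
      (fun k x => Fbar_apply ht hP hPsym k x) (fun k x => Fbar_apply ht hP hPsym k x)
      (σ i) (σ j) i j
  rw [h1, h2]

lemma C11_rowsum (hP : IsDesign P) (i : Fin t) : ∑ j, C11 p t n a P i j = 0 := by
  have e : ∀ j, C11 p t n a P i j = (n:ℝ) * ((∑ s, P s * ((Tmat s)ᵀ * Amat p n a * Tmat s) i j)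
      - ((Tbar P)ᵀ * Bmat p n a * Tbar P) i j) := fun j => C11_apply i j
  rw [Finset.sum_congr rfl (fun j _ => e j), ← Finset.mul_sum, Finset.sum_sub_distrib]
  rw [Finset.sum_comm]
  have h1 : ∀ s : Fin p → Fin t, ∑ j, P s * ((Tmat s)ᵀ * Amat p n a * Tmat s) i j = 0 := by
    intro s
    rw [← Finset.mul_sum, rowsum_conj_one (Tmat_rowsum s) Amat_rowsum i, mul_zero]
  rw [Finset.sum_congr rfl (fun s _ => h1 s),
    rowsum_conj_one (Tbar_rowsum hP) Bmat_rowsum i]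
  simp

lemma C12_rowsum (hp0 : 0 < p) (ht : 1 ≤ t) (hP : IsDesign P)
    (hPsym : IsSymmetricDesign P) (i : Fin t) : ∑ j, C12 p t n a P i j = 0 := by
  have e : ∀ j, C12 p t n a P i j = (n:ℝ) * ((∑ s, P s * ((Tmat s)ᵀ * Amat p n a * Fmat s) i j)
      - ((Tbar P)ᵀ * Bmat p n a * Fbar P) i j) := fun j => C12_apply i j
  rw [Finset.sum_congr rfl (fun j _ => e j), ← Finset.mul_sum, Finset.sum_sub_distrib]
  rw [Finset.sum_comm]
  have h1 : ∀ s : Fin p → Fin t, ∑ j, P s * ((Tmat s)ᵀ * Amat p n a * Fmat s) i j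
      = -∑ k, P s * Tmat s k i * Amat p n a k ⟨0, hp0⟩ := by
    intro s
    rw [← Finset.mul_sum, rowsum_conj_F hp0 (Fmat_rowsum s) Amat_rowsum i, mul_neg,
      Finset.mul_sum]
    congr 1
    exact Finset.sum_congr rfl (fun k _ => (mul_assoc _ _ _).symm)
  rw [Finset.sum_congr rfl (fun s _ => h1 s)]
  have h2 : ∑ s : Fin p → Fin t, -∑ k, P s * Tmat s k i * Amat p n a k ⟨0, hp0⟩ = 0 := by
    rw [Finset.sum_neg_distrib, Finset.sum_comm]
    have h3 : ∀ k : Fin p, ∑ s : Fin p → Fin t, P s * Tmat s k i * Amat p n a k ⟨0, hp0⟩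
        = (1/(t:ℝ)) * Amat p n a k ⟨0, hp0⟩ := by
      intro k
      rw [← Finset.sum_mul, Tmarg ht hP hPsym k i]
    rw [Finset.sum_congr rfl (fun k _ => h3 k), ← Finset.mul_sum,
      Amat_colsum (⟨0, hp0⟩ : Fin p), mul_zero, neg_zero]
  rw [h2]
  have h5 : ∑ j, ((Tbar P)ᵀ * Bmat p n a * Fbar P) i j
      = -∑ k, Tbar P k i * Bmat p n a k ⟨0, hp0⟩ :=
    rowsum_conj_F hp0 (Fbar_rowsum hP) Bmat_rowsum i
  rw [h5]
  have h6 : ∑ k, Tbar P k i * Bmat p n a k ⟨0, hp0⟩ = 0 := by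
    have : ∀ k : Fin p, Tbar P k i * Bmat p n a k ⟨0, hp0⟩
        = (1/(t:ℝ)) * Bmat p n a k ⟨0, hp0⟩ := by
      intro k; rw [Tbar_apply ht hP hPsym]
    rw [Finset.sum_congr rfl (fun k _ => this k), ← Finset.mul_sum,
      Bmat_colsum (⟨0, hp0⟩ : Fin p), mul_zero]
  rw [h6]
  simp

lemma C12_colsum (hP : IsDesign P) (j : Fin t) : ∑ i, C12 p t n a P i j = 0 := by
  have e : ∀ i, C12 p t n a P i j = (n:ℝ) * ((∑ s, P s * ((Tmat s)ᵀ * Amat p n a * Fmat s) i j)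
      - ((Tbar P)ᵀ * Bmat p n a * Fbar P) i j) := fun i => C12_apply i j
  rw [Finset.sum_congr rfl (fun i _ => e i), ← Finset.mul_sum, Finset.sum_sub_distrib]
  rw [Finset.sum_comm]
  have h1 : ∀ s : Fin p → Fin t, ∑ i, P s * ((Tmat s)ᵀ * Amat p n a * Fmat s) i j = 0 := by
    intro s
    rw [← Finset.mul_sum, colsum_conj (Tmat_rowsum s) Amat_colsum j, mul_zero]
  rw [Finset.sum_congr rfl (fun s _ => h1 s),
    colsum_conj (Tbar_rowsum hP) Bmat_colsum j]
  simp

end csec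
end ThmAux
namespace ThmAux

section csform
variable {t : ℕ}

lemma exists_perm_pair (ht : 2 ≤ t) {i j : Fin t} (hij : i ≠ j) :
    ∃ σ : Equiv.Perm (Fin t), σ ⟨0, by omega⟩ = i ∧ σ ⟨1, by omega⟩ = j := by
  set i0 : Fin t := ⟨0, by omega⟩
  set i1 : Fin t := ⟨1, by omega⟩
  have h01 : i0 ≠ i1 := by simp only [i0, i1, ne_eq, Fin.mk.injEq]; omega
  set τ1 := Equiv.swap i0 i with hτ1
  set j' := τ1.symm j with hj'
  have hj'1 : τ1 j' = j := Equiv.apply_symm_apply _ _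
  have hj'i0 : j' ≠ i0 := by
    intro h
    apply hij
    rw [← hj'1, h, Equiv.swap_apply_left]
  set τ2 := Equiv.swap i1 j' with hτ2
  refine ⟨τ2.trans τ1, ?_, ?_⟩
  · have h2 : τ2 i0 = i0 := Equiv.swap_apply_of_ne_of_ne h01 (Ne.symm hj'i0)
    rw [Equiv.trans_apply, h2, Equiv.swap_apply_left]
  · have h2 : τ2 i1 = j' := Equiv.swap_apply_left _ _
    rw [Equiv.trans_apply, h2, hj'1]

lemma cs_entries (ht : 2 ≤ t) {X : Matrix (Fin t) (Fin t) ℝ}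
    (hcs : ∀ (σ : Equiv.Perm (Fin t)) i j, X (σ i) (σ j) = X i j) (i j : Fin t) :
    X i j = if i = j then X ⟨0, by omega⟩ ⟨0, by omega⟩ else X ⟨0, by omega⟩ ⟨1, by omega⟩ := by
  by_cases hij : i = j
  · subst hij
    rw [if_pos rfl]
    have h := hcs (Equiv.swap (⟨0, by omega⟩ : Fin t) i) ⟨0, by omega⟩ ⟨0, by omega⟩
    rw [Equiv.swap_apply_left] at h
    exact h
  · rw [if_neg hij]
    obtain ⟨σ, h0, h1⟩ := exists_perm_pair ht hij
    have h := hcs σ ⟨0, by omega⟩ ⟨1, by omega⟩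
    rw [h0, h1] at h
    exact h

lemma sum_ite_diag (ht : 2 ≤ t) (i0 : Fin t) (x y : ℝ) :
    ∑ j : Fin t, (if i0 = j then x else y) = x + ((t:ℝ) - 1) * y := by
  have h1 : ∀ j : Fin t, (if i0 = j then x else y) = y + (if i0 = j then x - y else 0) := by
    intro j; by_cases h : i0 = j <;> simp [h]
  rw [Finset.sum_congr rfl (fun j _ => h1 j), Finset.sum_add_distrib,
    Finset.sum_ite_eq Finset.univ i0 (fun _ => x - y)]
  simp [Finset.card_univ]
  ring

lemma cs_rowsum_smulK (ht : 2 ≤ t) {X : Matrix (Fin t) (Fin t) ℝ}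
    (hcs : ∀ (σ : Equiv.Perm (Fin t)) i j, X (σ i) (σ j) = X i j)
    (hrow : ∀ i, ∑ j, X i j = 0) :
    X = (((t:ℝ)/((t:ℝ) - 1)) * X ⟨0, by omega⟩ ⟨0, by omega⟩) • Bsq t := by
  have htR : (2:ℝ) ≤ (t:ℝ) := by exact_mod_cast ht
  have ht0 : (t:ℝ) ≠ 0 := by linarith
  have ht1 : (t:ℝ) - 1 ≠ 0 := by linarith
  set x := X (⟨0, by omega⟩ : Fin t) (⟨0, by omega⟩ : Fin t) with hx
  set y := X (⟨0, by omega⟩ : Fin t) (⟨1, by omega⟩ : Fin t) with hy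
  have hrel : x + ((t:ℝ) - 1) * y = 0 := by
    have h := hrow ⟨0, by omega⟩
    rw [Finset.sum_congr rfl (fun j _ => cs_entries ht hcs ⟨0, by omega⟩ j)] at h
    rw [sum_ite_diag ht] at h
    exact h
  ext i j
  rw [cs_entries ht hcs i j, Matrix.smul_apply, Bsq_apply (by omega) i j, smul_eq_mul]
  have hfin : (i = j) ↔ ((i:ℕ) = (j:ℕ)) := Fin.ext_iff
  have hyx : y = -x / ((t:ℝ) - 1) := by
    rw [eq_div_iff ht1]
    linarith [hrel]
  by_cases h : i = j
  · rw [if_pos h, if_pos (hfin.1 h)]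
    field_simp
    exact hx.symm
  · rw [if_neg h, if_neg (fun hh => h (hfin.2 hh))]
    have e : (t:ℝ)/((t:ℝ)-1) * x * (0 - 1/(t:ℝ)) = -x/((t:ℝ)-1) := by
      field_simp
      ring
    rw [e]
    exact hyx

lemma cs_mulK (ht : 2 ≤ t) {X : Matrix (Fin t) (Fin t) ℝ}
    (hcs : ∀ (σ : Equiv.Perm (Fin t)) i j, X (σ i) (σ j) = X i j) :
    Bsq t * X = (X ⟨0, by omega⟩ ⟨0, by omega⟩ - X ⟨0, by omega⟩ ⟨1, by omega⟩) • Bsq t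
    ∧ X * Bsq t = (X ⟨0, by omega⟩ ⟨0, by omega⟩ - X ⟨0, by omega⟩ ⟨1, by omega⟩) • Bsq t := by
  have htR : (2:ℝ) ≤ (t:ℝ) := by exact_mod_cast ht
  have ht0 : (t:ℝ) ≠ 0 := by linarith
  have ht1 : (t:ℝ) - 1 ≠ 0 := by linarith
  set x := X (⟨0, by omega⟩ : Fin t) (⟨0, by omega⟩ : Fin t) with hx
  set y := X (⟨0, by omega⟩ : Fin t) (⟨1, by omega⟩ : Fin t) with hy
  constructor
  · ext i j
    rw [Matrix.mul_apply, Matrix.smul_apply, Bsq_apply (by omega) i j, smul_eq_mul]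
    have h1 : ∀ m : Fin t, Bsq t i m * X m j
        = (if (i:ℕ) = (m:ℕ) then (if m = j then x else y) else 0)
          - (1/(t:ℝ)) * (if m = j then x else y) := by
      intro m
      rw [Bsq_apply (by omega) i m, cs_entries ht hcs m j]
      by_cases h' : m = j
      · subst h'
        by_cases h : (i:ℕ) = (m:ℕ) <;> simp [h, ← hx] <;> ring
      · by_cases h : (i:ℕ) = (m:ℕ) <;> simp [h, h', ← hy] <;> ring
    rw [Finset.sum_congr rfl (fun m _ => h1 m), Finset.sum_sub_distrib,
      sum_delta_fin i (fun m => if m = j then x else y), ← Finset.mul_sum]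
    have h2 : ∑ m : Fin t, (if m = j then x else y) = x + ((t:ℝ) - 1) * y := by
      have e : ∀ m : Fin t, (if m = j then x else y) = (if j = m then x else y) := by
        intro m; by_cases h : m = j
        · rw [if_pos h, if_pos h.symm]
        · rw [if_neg h, if_neg (fun hh => h hh.symm)]
      rw [Finset.sum_congr rfl (fun m _ => e m)]
      exact sum_ite_diag ht j x y
    rw [h2]
    have hfin : (i = j) ↔ ((i:ℕ) = (j:ℕ)) := Fin.ext_iff
    by_cases h : i = j
    · rw [if_pos h, if_pos (hfin.1 h)]
      field_simp
      ring
    · rw [if_neg h, if_neg (fun hh => h (hfin.2 hh))]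
      field_simp
      ring
  · ext i j
    rw [Matrix.mul_apply, Matrix.smul_apply, Bsq_apply (by omega) i j, smul_eq_mul]
    have h1 : ∀ m : Fin t, X i m * Bsq t m j
        = (if (m:ℕ) = (j:ℕ) then (if i = m then x else y) else 0)
          - (1/(t:ℝ)) * (if i = m then x else y) := by
      intro m
      rw [Bsq_apply (by omega) m j, cs_entries ht hcs i m]
      by_cases h' : i = m
      · subst h'
        by_cases h : (i:ℕ) = (j:ℕ) <;> simp [h] <;> ring
      · by_cases h : (m:ℕ) = (j:ℕ) <;> simp [h, h'] <;> ring
    rw [Finset.sum_congr rfl (fun m _ => h1 m), Finset.sum_sub_distrib, ← Finset.mul_sum]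
    have h3 : ∑ m : Fin t, (if (m:ℕ) = (j:ℕ) then (if i = m then x else y) else 0)
        = (if i = j then x else y) := by
      have e : ∀ m : Fin t, (if (m:ℕ) = (j:ℕ) then (if i = m then x else y) else 0)
          = (if (j:ℕ) = (m:ℕ) then (if i = m then x else y) else 0) := by
        intro m; by_cases h : (m:ℕ) = (j:ℕ)
        · rw [if_pos h, if_pos h.symm]
        · rw [if_neg h, if_neg (fun hh => h hh.symm)]
      rw [Finset.sum_congr rfl (fun m _ => e m), sum_delta_fin j (fun m => if i = m then x else y)]
    rw [h3, sum_ite_diag ht i x y]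
    have hfin : (i = j) ↔ ((i:ℕ) = (j:ℕ)) := Fin.ext_iff
    by_cases h : i = j
    · rw [if_pos h, if_pos (hfin.1 h)]
      field_simp
      ring
    · rw [if_neg h, if_neg (fun hh => h (hfin.2 hh))]
      field_simp
      ring

end csform
end ThmAux
namespace ThmAux

section traces
variable {p t n : ℕ} {a : ℕ → ℝ} {P : (Fin p → Fin t) → ℝ}

lemma Tbar_mul_Bsq (ht : 1 ≤ t) (hP : IsDesign P) (hPsym : IsSymmetricDesign P) :
    Tbar P * Bsq t = 0 := by
  ext k j
  rw [Matrix.mul_apply]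
  have e : ∀ i, Tbar P k i * Bsq t i j = (1/(t:ℝ)) * Bsq t i j := by
    intro i; rw [Tbar_apply ht hP hPsym]
  rw [Finset.sum_congr rfl (fun i _ => e i), ← Finset.mul_sum, Bsq_colsum, mul_zero]
  rfl

lemma Fbar_mul_Bsq (ht : 1 ≤ t) (hP : IsDesign P) (hPsym : IsSymmetricDesign P) :
    Fbar P * Bsq t = 0 := by
  ext k j
  rw [Matrix.mul_apply]
  have e : ∀ i, Fbar P k i * Bsq t i j
      = (if (k:ℕ) = 0 then 0 else 1/(t:ℝ)) * Bsq t i j := by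
    intro i; rw [Fbar_apply ht hP hPsym]
  rw [Finset.sum_congr rfl (fun i _ => e i), ← Finset.mul_sum, Bsq_colsum, mul_zero]
  rfl

lemma KCK_trace (A' M2 : Matrix (Fin p) (Fin p) ℝ)
    (U V : (Fin p → Fin t) → Matrix (Fin p) (Fin t) ℝ) (Ub Vb : Matrix (Fin p) (Fin t) ℝ)
    (hU : Ub * Bsq t = 0) :
    (Bsq t * ((n:ℝ) • (∑ s, P s • ((U s)ᵀ * A' * V s) - Ubᵀ * M2 * Vb)) * Bsq t).trace
      = (n:ℝ) * ∑ s, P s * (Bsq t * (U s)ᵀ * A' * V s * Bsq t).trace := by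
  have hKU : Bsq t * Ubᵀ = 0 := by
    rw [← Bsq_transpose, ← Matrix.transpose_mul, hU, Matrix.transpose_zero]
  have h0 : Bsq t * (Ubᵀ * M2 * Vb) * Bsq t = 0 := by
    rw [← Matrix.mul_assoc, ← Matrix.mul_assoc, hKU, Matrix.zero_mul, Matrix.zero_mul,
      Matrix.zero_mul]
  rw [Matrix.mul_smul, Matrix.smul_mul, Matrix.trace_smul, smul_eq_mul]
  congr 1
  rw [Matrix.mul_sub, Matrix.sub_mul, h0, sub_zero]
  rw [Matrix.mul_sum, Matrix.sum_mul, Matrix.trace_sum]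
  apply Finset.sum_congr rfl
  intro s _
  rw [Matrix.mul_smul, Matrix.smul_mul, Matrix.trace_smul, smul_eq_mul]
  congr 1
  simp only [Matrix.mul_assoc]

lemma trace_KC11K (ht : 1 ≤ t) (hP : IsDesign P) (hPsym : IsSymmetricDesign P) :
    (Bsq t * C11 p t n a P * Bsq t).trace = (n:ℝ) * ∑ s, P s * q11 p t n a s :=
  KCK_trace (Amat p n a) (Bmat p n a) Tmat Tmat (Tbar P) (Tbar P)
    (Tbar_mul_Bsq ht hP hPsym)

lemma trace_KC12K (ht : 1 ≤ t) (hP : IsDesign P) (hPsym : IsSymmetricDesign P) :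
    (Bsq t * C12 p t n a P * Bsq t).trace = (n:ℝ) * ∑ s, P s * q12 p t n a s :=
  KCK_trace (Amat p n a) (Bmat p n a) Tmat Fmat (Tbar P) (Fbar P)
    (Tbar_mul_Bsq ht hP hPsym)

lemma trace_KC22K (ht : 1 ≤ t) (hP : IsDesign P) (hPsym : IsSymmetricDesign P) :
    (Bsq t * C22 p t n a P * Bsq t).trace = (n:ℝ) * ∑ s, P s * q22 p t n a s :=
  KCK_trace (Amat p n a) (Bmat p n a) Fmat Fmat (Fbar P) (Fbar P)
    (Fbar_mul_Bsq ht hP hPsym)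

end traces
end ThmAux
namespace ThmAux

section posit
variable {p t n : ℕ} {a : ℕ → ℝ}

lemma trace_transpose_mul_self_nonneg {m q : ℕ} (X : Matrix (Fin m) (Fin q) ℝ) :
    0 ≤ (Xᵀ * X).trace := by
  rw [Matrix.trace]
  apply Finset.sum_nonneg
  intro j _
  rw [Matrix.diag_apply, Matrix.mul_apply]
  apply Finset.sum_nonneg
  intro i _
  rw [Matrix.transpose_apply]
  exact mul_self_nonneg _

lemma conj_B_eq {k : ℕ} (hk : k ≤ p) (G : Matrix (Fin p) (Fin t) ℝ) :
    Gᵀ * Bblock k p p * G = (Bblock k p p * G)ᵀ * (Bblock k p p * G) := by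
  rw [Matrix.transpose_mul, Bblock_transpose,
    ← Matrix.mul_assoc (Gᵀ * Bblock k p p) (Bblock k p p) G,
    Matrix.mul_assoc Gᵀ (Bblock k p p) (Bblock k p p), Bblock_idem k hk]

lemma conj_B_nonneg {k : ℕ} (hk : k ≤ p) (G : Matrix (Fin p) (Fin t) ℝ) :
    0 ≤ (Gᵀ * Bblock k p p * G).trace := by
  rw [conj_B_eq hk]
  exact trace_transpose_mul_self_nonneg _

lemma q22_eq (s : Fin p → Fin t) :
    q22 p t n a s = ∑ k ∈ Finset.Icc 1 p,
      alphaCoef n a k * ((Fmat s * Bsq t)ᵀ * Bblock k p p * (Fmat s * Bsq t)).trace := by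
  unfold q22
  have e : Bsq t * (Fmat s)ᵀ * Amat p n a * Fmat s * Bsq t
      = (Fmat s * Bsq t)ᵀ * Amat p n a * (Fmat s * Bsq t) := by
    rw [Matrix.transpose_mul, Bsq_transpose]
    simp only [Matrix.mul_assoc]
  rw [e]
  unfold Amat
  rw [Matrix.mul_sum, Matrix.sum_mul, Matrix.trace_sum]
  apply Finset.sum_congr rfl
  intro k _
  rw [Matrix.mul_smul, Matrix.smul_mul, Matrix.trace_smul, smul_eq_mul]

lemma q22_nonneg (hn : 1 ≤ n) (ha0 : ∀ k ∈ Finset.Icc 1 p, 0 ≤ a k)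
    (hsum : ∑ k ∈ Finset.Icc 1 p, a k = 1) (s : Fin p → Fin t) :
    0 ≤ q22 p t n a s := by
  rw [q22_eq]
  apply Finset.sum_nonneg
  intro k hk
  obtain ⟨hk1, hkp⟩ := Finset.mem_Icc.1 hk
  exact mul_nonneg (alpha_nonneg hn ha0 hsum hk1 hkp) (conj_B_nonneg hkp _)

lemma traceB_pos (hp : 2 ≤ p) (ht : 2 ≤ t) {k0 : ℕ} (hk2 : 2 ≤ k0) (hk0p : k0 ≤ p)
    (s : Fin p → Fin t) :
    0 < ((Fmat s * Bsq t)ᵀ * Bblock k0 p p * (Fmat s * Bsq t)).trace := by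
  set G := Fmat s * Bsq t with hG
  set B := Bblock k0 p p with hB
  set H := B * G with hH
  have htrace : (Gᵀ * B * G).trace = ∑ j, ∑ m, (H m j)^2 := by
    rw [conj_B_eq hk0p, Matrix.trace]
    apply Finset.sum_congr rfl
    intro j _
    rw [Matrix.diag_apply, Matrix.mul_apply]
    apply Finset.sum_congr rfl
    intro m _
    rw [Matrix.transpose_apply, sq]
  set m0 : Fin p := ⟨0, by omega⟩ with hm0
  set m1 : Fin p := ⟨1, by omega⟩ with hm1
  set j0 : Fin t := s m0 with hj0
  have hm0v : (m0:ℕ) = 0 := rfl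
  have hm1v : (m1:ℕ) = 1 := rfl
  -- G entries
  have hG0 : ∀ j, G m0 j = 0 := by
    intro j
    rw [hG, Fmat_mul_apply]
    rw [dif_pos rfl]
  have hG1 : G m1 j0 = 1 - 1/(t:ℝ) := by
    rw [hG, Fmat_mul_apply]
    rw [dif_neg (by omega)]
    have h : (⟨(↑m1:ℕ) - 1, lt_of_le_of_lt (Nat.sub_le _ _) m1.isLt⟩ : Fin p) = m0 := rfl
    rw [h, ← hj0, Bsq_apply (by omega), if_pos rfl]
  -- difference of H rows
  have hdiff : H m1 j0 - H m0 j0 = 1 - 1/(t:ℝ) := by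
    rw [hH, Matrix.mul_apply, Matrix.mul_apply, ← Finset.sum_sub_distrib]
    have e : ∀ m' : Fin p, B m1 m' * G m' j0 - B m0 m' * G m' j0
        = (if (m1:ℕ) = (m':ℕ) then G m' j0 else 0)
          - (if (m0:ℕ) = (m':ℕ) then G m' j0 else 0) := by
      intro m'
      rw [hB]
      simp only [Bblock, Matrix.of_apply]
      by_cases hm' : (m':ℕ) < k0
      · rw [if_pos (⟨by omega, hm'⟩ : (m1:ℕ) < k0 ∧ (m':ℕ) < k0),
          if_pos (⟨by omega, hm'⟩ : (m0:ℕ) < k0 ∧ (m':ℕ) < k0)]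
        by_cases h1 : (m1:ℕ) = (m':ℕ) <;> by_cases h0 : (m0:ℕ) = (m':ℕ)
        · omega
        · rw [if_pos h1, if_pos h1, if_neg h0, if_neg h0]; ring
        · rw [if_neg h1, if_neg h1, if_pos h0, if_pos h0]; ring
        · rw [if_neg h1, if_neg h1, if_neg h0, if_neg h0]; ring
      · rw [if_neg (by tauto), if_neg (by tauto)]
        have h1 : ¬ (m1:ℕ) = (m':ℕ) := by omega
        have h0 : ¬ (m0:ℕ) = (m':ℕ) := by omega
        rw [if_neg h1, if_neg h0]
        ring
    rw [Finset.sum_congr rfl (fun m' _ => e m'), Finset.sum_sub_distrib,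
      sum_delta_fin m1 (fun m' => G m' j0), sum_delta_fin m0 (fun m' => G m' j0),
      hG1, hG0]
    ring
  -- lower bound of trace by two entries
  have hge : (Gᵀ * B * G).trace ≥ (H m0 j0)^2 + (H m1 j0)^2 := by
    rw [htrace]
    have h1 : ∀ j, 0 ≤ ∑ m, (H m j)^2 :=
      fun j => Finset.sum_nonneg (fun m _ => sq_nonneg _)
    have h2 : ∑ m, (H m j0)^2 ≥ (H m0 j0)^2 + (H m1 j0)^2 := by
      have hsub : ({m0, m1} : Finset (Fin p)) ⊆ Finset.univ := Finset.subset_univ _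
      have hne : m0 ≠ m1 := Fin.ne_of_val_ne (by omega)
      have := Finset.sum_le_sum_of_subset_of_nonneg hsub
        (fun m _ _ => sq_nonneg (H m j0))
      rw [Finset.sum_insert (by simp [hne]), Finset.sum_singleton] at this
      exact this
    calc ∑ j, ∑ m, (H m j)^2 ≥ ∑ m, (H m j0)^2 :=
          Finset.single_le_sum (fun j _ => h1 j) (Finset.mem_univ j0)
      _ ≥ (H m0 j0)^2 + (H m1 j0)^2 := h2
  have htR : (2:ℝ) ≤ (t:ℝ) := by exact_mod_cast ht
  have hval : (1:ℝ) - 1/(t:ℝ) ≥ 1/2 := by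
    rw [ge_iff_le, le_sub_iff_add_le]
    rw [div_add_div _ _ (by norm_num) (by linarith : (t:ℝ) ≠ 0)]
    rw [div_le_one (by linarith)]
    linarith
  nlinarith [hge, hdiff, sq_nonneg (H m0 j0), sq_nonneg (H m1 j0),
    sq_nonneg (H m1 j0 + H m0 j0)]

lemma q22_pos (hp : 2 ≤ p) (ht : 2 ≤ t) (hn : 1 ≤ n)
    (ha0 : ∀ k ∈ Finset.Icc 1 p, 0 ≤ a k)
    (hsum : ∑ k ∈ Finset.Icc 1 p, a k = 1)
    (hex : ∃ k ∈ Finset.Icc 2 p, 0 < a k) (s : Fin p → Fin t) :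
    0 < q22 p t n a s := by
  obtain ⟨k0, hk0, hak0⟩ := hex
  obtain ⟨hk02, hk0p⟩ := Finset.mem_Icc.1 hk0
  rw [q22_eq]
  apply Finset.sum_pos'
  · intro k hk
    obtain ⟨hk1, hkp⟩ := Finset.mem_Icc.1 hk
    exact mul_nonneg (alpha_nonneg hn ha0 hsum hk1 hkp) (conj_B_nonneg hkp _)
  · refine ⟨k0, Finset.mem_Icc.2 ⟨by omega, hk0p⟩, ?_⟩
    exact mul_pos (alpha_pos hn ha0 hsum (by omega) hk0p hak0)
      (traceB_pos hp ht hk02 hk0p s)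

end posit
end ThmAux
namespace ThmAux

section qminsec
variable {p t n : ℕ} {a : ℕ → ℝ} {P : (Fin p → Fin t) → ℝ}

lemma qsum_expand (x : ℝ) :
    ∑ s, P s * qfun p t n a s x
      = (∑ s, P s * q11 p t n a s) + 2 * (∑ s, P s * q12 p t n a s) * x
        + (∑ s, P s * q22 p t n a s) * x^2 := by
  unfold qfun
  have e : ∀ s : Fin p → Fin t,
      P s * (q11 p t n a s + 2 * q12 p t n a s * x + q22 p t n a s * x ^ 2)
      = P s * q11 p t n a s + (P s * q12 p t n a s) * (2*x)
        + (P s * q22 p t n a s) * x^2 := by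
    intro s; ring
  rw [Finset.sum_congr rfl (fun s _ => e s), Finset.sum_add_distrib,
    Finset.sum_add_distrib, ← Finset.sum_mul, ← Finset.sum_mul]
  ring

lemma qmin_formula (hQ : 0 < ∑ s, P s * q22 p t n a s) :
    qmin p t n a P = (∑ s, P s * q11 p t n a s)
      - (∑ s, P s * q12 p t n a s)^2 / (∑ s, P s * q22 p t n a s) := by
  set Q11 := ∑ s, P s * q11 p t n a s
  set Q12 := ∑ s, P s * q12 p t n a s
  set Q22 := ∑ s, P s * q22 p t n a s
  have hQne : Q22 ≠ 0 := ne_of_gt hQ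
  have hr : (Q12^2/Q22) * Q22 = Q12^2 := by field_simp
  unfold qmin
  have hmin : IsLeast (Set.range fun x : ℝ => ∑ s, P s * qfun p t n a s x)
      (Q11 - Q12^2/Q22) := by
    constructor
    · refine ⟨-Q12/Q22, ?_⟩
      dsimp only
      rw [qsum_expand]
      field_simp
      ring
    · rintro y ⟨x, rfl⟩
      dsimp only
      rw [qsum_expand]
      nlinarith [sq_nonneg (Q22 * x + Q12), hQ, hr]
  exact hmin.csInf_eq

end qminsec
end ThmAux
open ThmAux in
/-- Theorem 3.2, parts (1) and (2): for every symmetric approximate design `P`,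
the matrix `C(P)` is completely symmetric and `tr C(P) = n · min_x ∑_s p_s q_s(x)`. -/
theorem symmetricDesign_CInfo
    (p t n : ℕ) (hp : 2 ≤ p) (ht : 2 ≤ t) (hn : 1 ≤ n)
    (a : ℕ → ℝ) (ha0 : ∀ k ∈ Finset.Icc 1 p, 0 ≤ a k)
    (hsum : ∑ k ∈ Finset.Icc 1 p, a k = 1)
    (hex : ∃ k ∈ Finset.Icc 2 p, 0 < a k)
    (P : (Fin p → Fin t) → ℝ) (hP : IsDesign P) (hPsym : IsSymmetricDesign P) :
    ∀ W : Matrix (Fin t) (Fin t) ℝ, IsGInv (C22 p t n a P) W →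
      ((∀ i j : Fin t, CInfo p t n a P W i i = CInfo p t n a P W j j) ∧
        (∀ i j k l : Fin t, i ≠ j → k ≠ l →
          CInfo p t n a P W i j = CInfo p t n a P W k l)) ∧
      (CInfo p t n a P W).trace = (n : ℝ) * qmin p t n a P := by
  intro W hW
  have hp0 : 0 < p := by omega
  have ht1 : 1 ≤ t := by omega
  have htR : (2:ℝ) ≤ (t:ℝ) := by exact_mod_cast ht
  have ht0 : ((t:ℝ)) ≠ 0 := by linarith
  have ht1R : (t:ℝ) - 1 ≠ 0 := by linarith
  have ht1pos : (0:ℝ) < (t:ℝ) - 1 := by linarith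
  have hnR : (0:ℝ) < (n:ℝ) := by exact_mod_cast (by omega : 0 < n)
  have hnne : (n:ℝ) ≠ 0 := ne_of_gt hnR
  set K := Bsq t with hK
  set Q11 := ∑ s, P s * q11 p t n a s with hQ11def
  set Q12 := ∑ s, P s * q12 p t n a s with hQ12def
  set Q22 := ∑ s, P s * q22 p t n a s with hQ22def
  -- scalar forms
  have hcs11 : ∀ (σ : Equiv.Perm (Fin t)) i j,
      C11 p t n a P (σ i) (σ j) = C11 p t n a P i j :=
    fun σ i j => C11_perm ht1 hP hPsym σ i j
  have hC11 : C11 p t n a P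
      = (((t:ℝ)/((t:ℝ)-1)) * C11 p t n a P ⟨0, by omega⟩ ⟨0, by omega⟩) • K :=
    cs_rowsum_smulK ht hcs11 (fun i => C11_rowsum hP i)
  set γ1 := ((t:ℝ)/((t:ℝ)-1)) * C11 p t n a P ⟨0, by omega⟩ ⟨0, by omega⟩ with hγ1
  have hcs12 : ∀ (σ : Equiv.Perm (Fin t)) i j,
      C12 p t n a P (σ i) (σ j) = C12 p t n a P i j :=
    fun σ i j => C12_perm ht1 hP hPsym σ i j
  have hC12 : C12 p t n a P
      = (((t:ℝ)/((t:ℝ)-1)) * C12 p t n a P ⟨0, by omega⟩ ⟨0, by omega⟩) • K :=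
    cs_rowsum_smulK ht hcs12 (fun i => C12_rowsum hp0 ht1 hP hPsym i)
  set γ2 := ((t:ℝ)/((t:ℝ)-1)) * C12 p t n a P ⟨0, by omega⟩ ⟨0, by omega⟩ with hγ2
  have hcs22 : ∀ (σ : Equiv.Perm (Fin t)) i j,
      C22 p t n a P (σ i) (σ j) = C22 p t n a P i j :=
    fun σ i j => C22_perm ht1 hP hPsym σ i j
  obtain ⟨hC22l, hC22r⟩ := cs_mulK ht hcs22
  set γ3 := C22 p t n a P ⟨0, by omega⟩ ⟨0, by omega⟩
    - C22 p t n a P ⟨0, by omega⟩ ⟨1, by omega⟩ with hγ3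
  -- trace identities
  have hKcK : ∀ c : ℝ, K * (c • K) * K = c • K := by
    intro c
    rw [Matrix.mul_smul, Bsq_idem, Matrix.smul_mul, Bsq_idem]
  have heq1 : γ1 * ((t:ℝ)-1) = (n:ℝ) * Q11 := by
    have h := trace_KC11K (n := n) (a := a) ht1 hP hPsym
    rw [hC11, hKcK, Matrix.trace_smul, Bsq_trace ht1, smul_eq_mul] at h
    exact h
  have heq2 : γ2 * ((t:ℝ)-1) = (n:ℝ) * Q12 := by
    have h := trace_KC12K (n := n) (a := a) ht1 hP hPsym
    rw [hC12, hKcK, Matrix.trace_smul, Bsq_trace ht1, smul_eq_mul] at h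
    exact h
  have hKC22K : K * C22 p t n a P * K = γ3 • K := by
    rw [hC22l, Matrix.smul_mul, Bsq_idem]
  have heq3 : γ3 * ((t:ℝ)-1) = (n:ℝ) * Q22 := by
    have h := trace_KC22K (n := n) (a := a) ht1 hP hPsym
    rw [hKC22K, Matrix.trace_smul, Bsq_trace ht1, smul_eq_mul] at h
    exact h
  -- positivity
  have hq22pos : ∀ s : Fin p → Fin t, 0 < q22 p t n a s :=
    fun s => q22_pos hp ht hn ha0 hsum hex s
  have hex_s : ∃ s : Fin p → Fin t, 0 < P s := by
    by_contra hcon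
    push_neg at hcon
    have hle : ∑ s, P s ≤ 0 := Finset.sum_nonpos (fun s _ => hcon s)
    rw [hP.2] at hle
    linarith
  obtain ⟨s0, hs0⟩ := hex_s
  have hQ22pos : 0 < Q22 := by
    rw [hQ22def]
    apply Finset.sum_pos'
    · intro s _
      exact mul_nonneg (hP.1 s) (le_of_lt (hq22pos s))
    · exact ⟨s0, Finset.mem_univ s0, mul_pos hs0 (hq22pos s0)⟩
  have hQ22ne : Q22 ≠ 0 := ne_of_gt hQ22pos
  have hγ3pos : 0 < γ3 := by nlinarith [heq3, mul_pos hnR hQ22pos, ht1pos]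
  have hγ3ne : γ3 ≠ 0 := ne_of_gt hγ3pos
  -- generalized inverse manipulation
  have hW' : C22 p t n a P * W * C22 p t n a P = C22 p t n a P := hW
  have h1 : (γ3 • K) * W * (γ3 • K) = γ3 • K := by
    have e : K * C22 p t n a P * W * (C22 p t n a P * K)
        = K * (C22 p t n a P * W * C22 p t n a P) * K := by
      simp only [Matrix.mul_assoc]
    have e2 : K * C22 p t n a P * W * (C22 p t n a P * K) = γ3 • K := by
      rw [e, hW', hKC22K]
    rw [hC22l, hC22r] at e2
    exact e2
  have h2 : (γ3*γ3) • (K*W*K) = γ3 • K := by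
    rw [← h1, Matrix.smul_mul, Matrix.smul_mul, Matrix.mul_smul, smul_smul]
  have hKWK : K * W * K = γ3⁻¹ • K := by
    calc K*W*K = (γ3*γ3)⁻¹ • ((γ3*γ3) • (K*W*K)) := by
          rw [smul_smul, inv_mul_cancel₀ (mul_ne_zero hγ3ne hγ3ne), one_smul]
      _ = (γ3*γ3)⁻¹ • (γ3 • K) := by rw [h2]
      _ = γ3⁻¹ • K := by
          rw [smul_smul]
          congr 1
          field_simp
  -- CInfo is a scalar multiple of K
  have hCI : CInfo p t n a P W = (γ1 - γ2^2 * γ3⁻¹) • K := by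
    unfold CInfo
    rw [hC11, hC12, Matrix.transpose_smul, Bsq_transpose]
    rw [Matrix.smul_mul, Matrix.smul_mul, Matrix.mul_smul, smul_smul, hKWK, smul_smul]
    rw [sub_smul]
    congr 1
    ring
  refine ⟨⟨?_, ?_⟩, ?_⟩
  · intro i j
    rw [hCI, hK, Matrix.smul_apply, Matrix.smul_apply, Bsq_apply ht1, Bsq_apply ht1,
      if_pos rfl, if_pos rfl]
  · intro i j k l hij hkl
    rw [hCI, hK, Matrix.smul_apply, Matrix.smul_apply, Bsq_apply ht1, Bsq_apply ht1,
      if_neg (fun h => hij (Fin.ext h)), if_neg (fun h => hkl (Fin.ext h))]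
  · rw [hCI, hK, Matrix.trace_smul, Bsq_trace ht1, smul_eq_mul, qmin_formula hQ22pos]
    have e1 : γ1 = (n:ℝ) * Q11 / ((t:ℝ)-1) := by rw [eq_div_iff ht1R]; exact heq1
    have e2 : γ2 = (n:ℝ) * Q12 / ((t:ℝ)-1) := by rw [eq_div_iff ht1R]; exact heq2
    have e3 : γ3 = (n:ℝ) * Q22 / ((t:ℝ)-1) := by rw [eq_div_iff ht1R]; exact heq3
    rw [e1, e2, e3, ← hQ11def, ← hQ12def, ← hQ22def]
    field_simp
end
end

section
/- For every treatment sequence s = (t_1, …, t_p) and every k ∈ {1, …, p}, with f_{k,i} = #{j ≤ k : t_j = i}, ξ_k = ∑_{i=1}^t f_{k,i}², and ρ_k = #{j ≤ k−1 : t_j = t_{j+1}}, the following trace identities hold: tr(B_t T_s' B^k_p T_s B_t) = k − ξ_k/k; tr(B_t T_s' B^k_p F_s B_t) = (k ρ_k + f_{k,t_k} − ξ_k)/k; and tr(B_t F_s' B^k_p F_s B_t) = (kt−1)(k−1)/(kt) − (ξ_k − 2 f_{k,t_k} + 1)/k. -/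
open Matrix Finset

noncomputable section

attribute [local instance] Classical.propDecidable

/-- `f_{k,i} = #{j ≤ k : t_j = i}`, the number of the first `k` periods receiving
treatment `i`. -/
def fcount {p t : ℕ} (s : Fin p → Fin t) (k : ℕ) (i : Fin t) : ℕ :=
  (Finset.univ.filter fun j : Fin p => (j : ℕ) < k ∧ s j = i).card

/-- `ξ_k = ∑_i f_{k,i}²`. -/
def xiSum {p t : ℕ} (s : Fin p → Fin t) (k : ℕ) : ℕ :=
  ∑ i, (fcount s k i) ^ 2

/-- `ρ_k = #{j ≤ k−1 : t_j = t_{j+1}}`. -/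
def rhoCount {p t : ℕ} (s : Fin p → Fin t) (k : ℕ) : ℕ :=
  (Finset.univ.filter fun j : Fin p =>
    (j : ℕ) + 1 < k ∧ ∃ h : (j : ℕ) + 1 < p, s j = s ⟨(j : ℕ) + 1, h⟩).card

/-! ### Auxiliary lemmas -/

section AuxTr

lemma Bsq_apply {t : ℕ} (i j : Fin t) :
    Bsq t i j = (if i = j then 1 else 0) - 1 / (t : ℝ) := by
  simp [Bsq, Bblock, i.isLt, j.isLt, Fin.val_inj]

lemma Bsq_mul_Bsq {t : ℕ} (ht : 1 ≤ t) : Bsq t * Bsq t = Bsq t := by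
  ext i j
  have ht' : (t : ℝ) ≠ 0 := by positivity
  simp only [Matrix.mul_apply, Bsq_apply]
  simp only [sub_mul, mul_sub, ite_mul, one_mul, zero_mul, mul_ite, mul_one, mul_zero]
  rw [Finset.sum_sub_distrib, Finset.sum_sub_distrib, Finset.sum_ite_eq, Finset.sum_ite_eq',
    Finset.sum_const]
  simp only [Finset.mem_univ, if_true, Finset.card_univ, Fintype.card_fin, nsmul_eq_mul]
  field_simp
  ring

variable {p t : ℕ} (s : Fin p → Fin t)

/-- the "previous treatment" map -/
def sprev (s : Fin p → Fin t) (a : Fin p) : Fin t :=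
  s ⟨(a : ℕ) - 1, lt_of_le_of_lt (Nat.sub_le _ _) a.isLt⟩

lemma TmulB (a : Fin p) (i : Fin t) :
    (Tmat s * Bsq t) a i = (if s a = i then 1 else 0) - 1 / (t : ℝ) := by
  simp only [Matrix.mul_apply, Tmat, Matrix.of_apply, Bsq_apply, ite_mul, one_mul, zero_mul]
  rw [Finset.sum_ite_eq]
  simp

lemma FmulB (b : Fin p) (i : Fin t) :
    (Fmat s * Bsq t) b i = if (b : ℕ) = 0 then 0 else
      (if sprev s b = i then 1 else 0) - 1 / (t : ℝ) := by
  simp only [Matrix.mul_apply, Fmat, Matrix.of_apply]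
  by_cases hb : (b : ℕ) = 0
  · simp [hb]
  · simp only [hb, if_false, ite_mul, one_mul, zero_mul, Bsq_apply]
    rw [Finset.sum_ite_eq]
    simp [sprev]
    exact if_congr Iff.rfl rfl rfl

lemma R_TT (b a : Fin p) :
    (Tmat s * Bsq t * (Tmat s)ᵀ) b a = (if s b = s a then 1 else 0) - 1 / (t : ℝ) := by
  rw [Matrix.mul_apply]
  simp only [Matrix.transpose_apply, Tmat, Matrix.of_apply, mul_ite, mul_one, mul_zero]
  rw [Finset.sum_ite_eq, if_pos (Finset.mem_univ _)]
  exact TmulB s b (s a)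

lemma R_TF (b a : Fin p) :
    (Fmat s * Bsq t * (Tmat s)ᵀ) b a =
      if (b : ℕ) = 0 then 0 else (if sprev s b = s a then 1 else 0) - 1 / (t : ℝ) := by
  rw [Matrix.mul_apply]
  simp only [Matrix.transpose_apply, Tmat, Matrix.of_apply, mul_ite, mul_one, mul_zero]
  rw [Finset.sum_ite_eq, if_pos (Finset.mem_univ _)]
  exact FmulB s b (s a)

lemma R_FF (b a : Fin p) :
    (Fmat s * Bsq t * (Fmat s)ᵀ) b a =
      if (a : ℕ) = 0 ∨ (b : ℕ) = 0 then 0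
      else (if sprev s b = sprev s a then 1 else 0) - 1 / (t : ℝ) := by
  rw [Matrix.mul_apply]
  simp only [Matrix.transpose_apply, Fmat, Matrix.of_apply]
  by_cases ha : (a : ℕ) = 0
  · simp [ha]
  · simp only [ha, if_false, false_or, mul_ite, mul_one, mul_zero]
    rw [Finset.sum_ite_eq, if_pos (Finset.mem_univ _)]
    exact FmulB s b (sprev s a)

lemma trace_red (ht : 1 ≤ t) (k : ℕ) (X Y : Matrix (Fin p) (Fin t) ℝ) :
    (Bsq t * Xᵀ * Bblock k p p * Y * Bsq t).trace
      = ∑ a : Fin p, ∑ b : Fin p, Bblock k p p a b * (Y * Bsq t * Xᵀ) b a := by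
  have h1 : Bsq t * Xᵀ * Bblock k p p * Y * Bsq t
      = (Bsq t * Xᵀ) * (Bblock k p p * Y * Bsq t) := by
    simp [Matrix.mul_assoc]
  rw [h1, Matrix.trace_mul_comm]
  have h2 : Bblock k p p * Y * Bsq t * (Bsq t * Xᵀ)
      = Bblock k p p * (Y * Bsq t * Xᵀ) := by
    rw [Matrix.mul_assoc (Bblock k p p) Y (Bsq t), Matrix.mul_assoc, Matrix.mul_assoc,
      ← Matrix.mul_assoc (Bsq t), Bsq_mul_Bsq ht, Matrix.mul_assoc]
  rw [h2]
  simp [Matrix.trace, Matrix.diag, Matrix.mul_apply]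


lemma card_A {k : ℕ} (hkp : k ≤ p) :
    ((univ : Finset (Fin p)).filter fun a : Fin p => (a : ℕ) < k).card = k := by
  have h : ((univ : Finset (Fin p)).filter fun a : Fin p => (a : ℕ) < k)
      = (univ : Finset (Fin k)).map (Fin.castLEEmb hkp) := by
    ext a
    simp only [mem_filter, mem_univ, true_and, mem_map, Fin.castLEEmb_apply]
    constructor
    · intro h; exact ⟨⟨a, h⟩, rfl⟩
    · rintro ⟨b, rfl⟩; exact b.isLt
  rw [h, Finset.card_map, Finset.card_univ, Fintype.card_fin]

lemma sum_fiber (S : Finset (Fin p)) (φ : Fin p → Fin t) (g : Fin t → ℝ) :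
    ∑ a ∈ S, g (φ a) = ∑ i : Fin t, ((S.filter fun a => φ a = i).card : ℝ) * g i := by
  rw [← Finset.sum_fiberwise_of_maps_to (fun a _ => Finset.mem_univ (φ a)) (fun a => g (φ a))]
  refine Finset.sum_congr rfl fun i _ => ?_
  calc ∑ a ∈ S.filter (fun a => φ a = i), g (φ a)
      = ∑ a ∈ S.filter (fun a => φ a = i), g i :=
        Finset.sum_congr rfl fun a ha => by rw [(Finset.mem_filter.mp ha).2]
    _ = _ := by rw [Finset.sum_const, nsmul_eq_mul]

lemma fib_T (k : ℕ) (i : Fin t) :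
    (((univ : Finset (Fin p)).filter fun a : Fin p => (a : ℕ) < k).filter
      fun a => s a = i).card = fcount s k i := by
  rw [Finset.filter_filter, fcount]

lemma card_A' {k : ℕ} (hk1 : 1 ≤ k) (hkp : k ≤ p) (hp : 0 < p) :
    (((univ : Finset (Fin p)).filter fun a : Fin p => (a : ℕ) < k).filter
      fun a : Fin p => ¬(a : ℕ) = 0).card = k - 1 := by
  have h0 : (⟨0, hp⟩ : Fin p) ∈ (univ : Finset (Fin p)).filter (fun a : Fin p => (a : ℕ) < k) := by
    simp only [mem_filter, mem_univ, true_and]; omega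
  have h : ((univ : Finset (Fin p)).filter fun a : Fin p => (a : ℕ) < k).filter
        (fun a : Fin p => ¬(a : ℕ) = 0)
      = ((univ : Finset (Fin p)).filter fun a : Fin p => (a : ℕ) < k).erase ⟨0, hp⟩ := by
    ext a
    simp only [mem_filter, mem_univ, true_and, Finset.mem_erase, Ne, Fin.ext_iff, Fin.val_mk]
    omega
  rw [h, Finset.card_erase_of_mem h0, card_A hkp]

/-- predecessor map on `Fin p` -/
def predF {p : ℕ} (a : Fin p) : Fin p :=
  ⟨(a : ℕ) - 1, lt_of_le_of_lt (Nat.sub_le _ _) a.isLt⟩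

lemma predF_injOn : Set.InjOn predF {a : Fin p | ¬(a : ℕ) = 0} := by
  intro a ha b hb hab
  simp only [Set.mem_setOf_eq] at ha hb
  have h1 : (a : ℕ) - 1 = (b : ℕ) - 1 := congrArg Fin.val hab
  exact Fin.ext (by omega)

set_option maxHeartbeats 1000000 in
lemma fib_F {k : ℕ} (hkp : k ≤ p) (i : Fin t) :
    ((((univ : Finset (Fin p)).filter fun a : Fin p => (a : ℕ) < k).filter
        fun a : Fin p => ¬(a : ℕ) = 0).filter fun a => sprev s a = i).card
      = fcount s (k - 1) i := by
  have himg : (((((univ : Finset (Fin p)).filter fun a : Fin p => (a : ℕ) < k).filter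
        fun a : Fin p => ¬(a : ℕ) = 0).filter fun a => sprev s a = i).image predF)
      = (univ : Finset (Fin p)).filter fun j : Fin p => (j : ℕ) < k - 1 ∧ s j = i := by
    ext j
    simp only [Finset.mem_image, mem_filter, mem_univ, true_and]
    constructor
    · rintro ⟨a, ⟨⟨hak, ha0⟩, hsp⟩, rfl⟩
      exact ⟨show (a : ℕ) - 1 < k - 1 by omega, hsp⟩
    · rintro ⟨hjk, hsj⟩
      have hj1 : (j : ℕ) + 1 < p := by omega
      refine ⟨⟨(j : ℕ) + 1, hj1⟩, ⟨⟨show (j : ℕ) + 1 < k by omega,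
        show ¬((j : ℕ) + 1 = 0) by omega⟩, ?_⟩, ?_⟩
      · exact (congrArg s (Fin.ext (show ((j : ℕ) + 1) - 1 = (j : ℕ) by omega))).trans hsj
      · exact Fin.ext (show ((j : ℕ) + 1) - 1 = (j : ℕ) by omega)
  calc ((((univ : Finset (Fin p)).filter fun a : Fin p => (a : ℕ) < k).filter
        fun a : Fin p => ¬(a : ℕ) = 0).filter fun a => sprev s a = i).card
      = (((((univ : Finset (Fin p)).filter fun a : Fin p => (a : ℕ) < k).filter
        fun a : Fin p => ¬(a : ℕ) = 0).filter fun a => sprev s a = i).image predF).card :=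
        (Finset.card_image_of_injOn (predF_injOn.mono (fun a ha => by
          simp only [Finset.coe_filter, Set.mem_setOf_eq, mem_filter, mem_univ,
            true_and] at ha
          exact ha.1.2))).symm
    _ = fcount s (k - 1) i := by rw [himg, fcount]

set_option maxHeartbeats 1000000 in
lemma fib_rho {k : ℕ} (hkp : k ≤ p) :
    ((((univ : Finset (Fin p)).filter fun a : Fin p => (a : ℕ) < k).filter
        fun a : Fin p => ¬(a : ℕ) = 0).filter fun a => sprev s a = s a).card
      = rhoCount s k := by
  have himg : (((((univ : Finset (Fin p)).filter fun a : Fin p => (a : ℕ) < k).filter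
        fun a : Fin p => ¬(a : ℕ) = 0).filter fun a => sprev s a = s a).image predF)
      = (univ : Finset (Fin p)).filter fun j : Fin p =>
          (j : ℕ) + 1 < k ∧ ∃ h : (j : ℕ) + 1 < p, s j = s ⟨(j : ℕ) + 1, h⟩ := by
    ext j
    simp only [Finset.mem_image, mem_filter, mem_univ, true_and]
    constructor
    · rintro ⟨a, ⟨⟨hak, ha0⟩, hsp⟩, rfl⟩
      have hav := a.isLt
      refine ⟨show (a : ℕ) - 1 + 1 < k by omega, show (a : ℕ) - 1 + 1 < p by omega, ?_⟩
      exact hsp.trans (congrArg s (Fin.ext (show (a : ℕ) = (a : ℕ) - 1 + 1 by omega)))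
    · rintro ⟨hjk, hj1, hsj⟩
      refine ⟨⟨(j : ℕ) + 1, by omega⟩, ⟨⟨show (j : ℕ) + 1 < k by omega,
        show ¬((j : ℕ) + 1 = 0) by omega⟩, ?_⟩, ?_⟩
      · exact (congrArg s (Fin.ext (show ((j : ℕ) + 1) - 1 = (j : ℕ) by omega))).trans hsj
      · exact Fin.ext (show ((j : ℕ) + 1) - 1 = (j : ℕ) by omega)
  calc ((((univ : Finset (Fin p)).filter fun a : Fin p => (a : ℕ) < k).filter
        fun a : Fin p => ¬(a : ℕ) = 0).filter fun a => sprev s a = s a).card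
      = (((((univ : Finset (Fin p)).filter fun a : Fin p => (a : ℕ) < k).filter
        fun a : Fin p => ¬(a : ℕ) = 0).filter fun a => sprev s a = s a).image predF).card :=
        (Finset.card_image_of_injOn (predF_injOn.mono (fun a ha => by
          simp only [Finset.coe_filter, Set.mem_setOf_eq, mem_filter, mem_univ,
            true_and] at ha
          exact ha.1.2))).symm
    _ = rhoCount s k := by rw [himg, rhoCount]

lemma fcount_split {k : ℕ} (hk1 : 1 ≤ k) (hm' : k - 1 < p) (i : Fin t) :
    fcount s k i = fcount s (k - 1) i
      + (if s ⟨k - 1, hm'⟩ = i then 1 else 0) := by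
  set m : Fin p := ⟨k - 1, hm'⟩ with hm
  have h2 : (if s m = i then 1 else 0)
      = ∑ j : Fin p, if j = m ∧ s j = i then 1 else 0 := by
    simp only [ite_and]
    rw [Finset.sum_ite_eq', if_pos (Finset.mem_univ _)]
  rw [fcount, fcount, Finset.card_filter, Finset.card_filter, h2, ← Finset.sum_add_distrib]
  refine Finset.sum_congr rfl fun j _ => ?_
  by_cases hs : s j = i
  · simp only [hs, and_true, Fin.ext_iff]
    have : (m : ℕ) = k - 1 := rfl
    split_ifs <;> omega
  · simp [hs]


lemma sum_Bblock {k : ℕ} (r : Fin p → Fin p → ℝ) :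
    ∑ a : Fin p, ∑ b : Fin p, Bblock k p p a b * r b a
      = (∑ a ∈ (univ : Finset (Fin p)).filter (fun a : Fin p => (a : ℕ) < k), r a a)
        - (1 / (k : ℝ)) * ∑ a ∈ (univ : Finset (Fin p)).filter (fun a : Fin p => (a : ℕ) < k),
            ∑ b ∈ (univ : Finset (Fin p)).filter (fun b : Fin p => (b : ℕ) < k), r b a := by
  have step1 : ∀ a : Fin p, ∑ b : Fin p, Bblock k p p a b * r b a
      = if (a : ℕ) < k then
          ∑ b ∈ (univ : Finset (Fin p)).filter (fun b : Fin p => (b : ℕ) < k),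
            (((if (a : ℕ) = (b : ℕ) then 1 else 0) - 1 / (k : ℝ)) * r b a)
        else 0 := by
    intro a
    by_cases ha : (a : ℕ) < k
    · simp only [ha, if_true, Bblock, Matrix.of_apply, true_and]
      rw [Finset.sum_filter]
      refine Finset.sum_congr rfl fun b _ => ?_
      by_cases hb : (b : ℕ) < k <;> simp [hb]
    · simp [Bblock, ha]
  rw [Finset.sum_congr rfl (fun a _ => step1 a), ← Finset.sum_filter, Finset.mul_sum,
    ← Finset.sum_sub_distrib]
  refine Finset.sum_congr rfl fun a ha => ?_
  simp only [sub_mul, ite_mul, one_mul, zero_mul, Fin.val_inj]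
  rw [Finset.sum_sub_distrib, Finset.sum_ite_eq, if_pos ha, ← Finset.mul_sum]

lemma count_ind (S : Finset (Fin p)) (P : Fin p → Prop) [DecidablePred P] :
    ∑ a ∈ S, (if P a then (1 : ℝ) else 0) = ((S.filter P).card : ℝ) := by
  rw [← Finset.sum_filter, Finset.sum_const, nsmul_eq_mul, mul_one]

lemma sum_if_zero (S : Finset (Fin p)) (E : Fin p → ℝ) :
    ∑ a ∈ S, (if (a : ℕ) = 0 then 0 else E a)
      = ∑ a ∈ S.filter (fun a : Fin p => ¬(a : ℕ) = 0), E a := by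
  rw [Finset.sum_filter]
  exact Finset.sum_congr rfl fun a _ => by by_cases h : (a : ℕ) = 0 <;> simp [h]


section Cases

variable {k : ℕ} (hp : 2 ≤ p) (ht : 2 ≤ t) (hk1 : 1 ≤ k) (hkp : k ≤ p)

lemma G1 (g : Fin t → ℝ) :
    ∑ a ∈ (univ : Finset (Fin p)).filter (fun a : Fin p => (a : ℕ) < k), g (s a)
      = ∑ i, (fcount s k i : ℝ) * g i := by
  rw [sum_fiber]
  exact Finset.sum_congr rfl fun i _ => by rw [fib_T s k i]

include hkp in
lemma G2 (g : Fin t → ℝ) :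
    ∑ a ∈ ((univ : Finset (Fin p)).filter (fun a : Fin p => (a : ℕ) < k)).filter
        (fun a : Fin p => ¬(a : ℕ) = 0), g (sprev s a)
      = ∑ i, (fcount s (k - 1) i : ℝ) * g i := by
  rw [sum_fiber]
  exact Finset.sum_congr rfl fun i _ => by rw [fib_F s hkp i]

lemma C1 (j : Fin t) :
    ∑ a ∈ (univ : Finset (Fin p)).filter (fun a : Fin p => (a : ℕ) < k),
      (if s a = j then (1 : ℝ) else 0) = (fcount s k j : ℝ) := by
  rw [count_ind, fib_T s k j]

include hkp in
lemma C2 (j : Fin t) :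
    ∑ a ∈ ((univ : Finset (Fin p)).filter (fun a : Fin p => (a : ℕ) < k)).filter
        (fun a : Fin p => ¬(a : ℕ) = 0), (if sprev s a = j then (1 : ℝ) else 0)
      = (fcount s (k - 1) j : ℝ) := by
  rw [count_ind, fib_F s hkp j]

include hk1 in
lemma fcount_cast (hm : k - 1 < p) (i : Fin t) :
    (fcount s (k - 1) i : ℝ)
      = (fcount s k i : ℝ) - (if s ⟨k - 1, hm⟩ = i then 1 else 0) := by
  have h := fcount_split s hk1 hm i
  rw [h]
  push_cast [apply_ite (Nat.cast : ℕ → ℝ)]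
  ring

lemma xiSum_cast : (xiSum s k : ℝ) = ∑ i, (fcount s k i : ℝ) * (fcount s k i : ℝ) := by
  rw [xiSum]
  push_cast
  exact Finset.sum_congr rfl fun i _ => sq (fcount s k i : ℝ) ▸ by ring

include hk1 hkp ht in
lemma case_TT :
    (Bsq t * (Tmat s)ᵀ * Bblock k p p * Tmat s * Bsq t).trace
      = (k : ℝ) - (xiSum s k : ℝ) / k := by
  have ht1 : 1 ≤ t := by omega
  have hk0 : (k : ℝ) ≠ 0 := Nat.cast_ne_zero.mpr (by omega)
  have ht0 : (t : ℝ) ≠ 0 := Nat.cast_ne_zero.mpr (by omega)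
  rw [trace_red ht1 k]
  simp only [R_TT s]
  rw [sum_Bblock]
  have hdiag : ∑ a ∈ (univ : Finset (Fin p)).filter (fun a : Fin p => (a : ℕ) < k),
      ((if s a = s a then 1 else 0) - 1 / (t : ℝ)) = (k : ℝ) * (1 - 1 / t) := by
    rw [Finset.sum_congr rfl (fun a _ => by rw [if_pos rfl]), Finset.sum_const,
      card_A hkp, nsmul_eq_mul]
  have hin : ∀ a ∈ (univ : Finset (Fin p)).filter (fun a : Fin p => (a : ℕ) < k),
      ∑ b ∈ (univ : Finset (Fin p)).filter (fun b : Fin p => (b : ℕ) < k),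
        ((if s b = s a then 1 else 0) - 1 / (t : ℝ))
      = (fcount s k (s a) : ℝ) - (k : ℝ) * (1 / t) := by
    intro a _
    rw [Finset.sum_sub_distrib, C1 s (s a), Finset.sum_const, card_A hkp, nsmul_eq_mul]
  rw [hdiag, Finset.sum_congr rfl hin, Finset.sum_sub_distrib,
    G1 s (fun i => (fcount s k i : ℝ)), Finset.sum_const, card_A hkp, nsmul_eq_mul,
    ← xiSum_cast s]
  field_simp
  ring

include ht hk1 hkp in
lemma case_TF (hm : k - 1 < p) :
    (Bsq t * (Tmat s)ᵀ * Bblock k p p * Fmat s * Bsq t).trace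
      = ((k : ℝ) * (rhoCount s k : ℝ) + (fcount s k (s ⟨k - 1, hm⟩) : ℝ)
          - (xiSum s k : ℝ)) / k := by
  have ht1 : 1 ≤ t := by omega
  have hp0 : 0 < p := by omega
  have hk0 : (k : ℝ) ≠ 0 := Nat.cast_ne_zero.mpr (by omega)
  have ht0 : (t : ℝ) ≠ 0 := Nat.cast_ne_zero.mpr (by omega)
  rw [trace_red ht1 k]
  simp only [R_TF s]
  rw [sum_Bblock]
  have hdiag : ∑ a ∈ (univ : Finset (Fin p)).filter (fun a : Fin p => (a : ℕ) < k),
      (if (a : ℕ) = 0 then (0 : ℝ) else (if sprev s a = s a then 1 else 0) - 1 / t)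
      = (rhoCount s k : ℝ) - ((k - 1 : ℕ) : ℝ) * (1 / t) := by
    rw [sum_if_zero, Finset.sum_sub_distrib, count_ind, fib_rho s hkp,
      Finset.sum_const, card_A' hk1 hkp hp0, nsmul_eq_mul]
  have hcross : ∑ i, (fcount s k i : ℝ) * (fcount s (k - 1) i : ℝ)
      = (xiSum s k : ℝ) - (fcount s k (s ⟨k - 1, hm⟩) : ℝ) := by
    have e : ∀ i ∈ (univ : Finset (Fin t)), (fcount s k i : ℝ) * (fcount s (k - 1) i : ℝ)
        = (fcount s k i : ℝ) * (fcount s k i : ℝ)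
          - (if s ⟨k - 1, hm⟩ = i then (fcount s k i : ℝ) else 0) := by
      intro i _
      rw [fcount_cast s hk1 hm i]
      by_cases h : s ⟨k - 1, hm⟩ = i <;> simp [h] <;> ring
    rw [Finset.sum_congr rfl e, Finset.sum_sub_distrib, ← xiSum_cast s,
      Finset.sum_ite_eq, if_pos (Finset.mem_univ _)]
  have hin : ∀ a ∈ (univ : Finset (Fin p)).filter (fun a : Fin p => (a : ℕ) < k),
      ∑ b ∈ (univ : Finset (Fin p)).filter (fun b : Fin p => (b : ℕ) < k),
        (if (b : ℕ) = 0 then (0 : ℝ) else (if sprev s b = s a then 1 else 0) - 1 / t)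
      = (fcount s (k - 1) (s a) : ℝ) - ((k - 1 : ℕ) : ℝ) * (1 / t) := by
    intro a _
    rw [sum_if_zero, Finset.sum_sub_distrib, C2 s hkp (s a), Finset.sum_const,
      card_A' hk1 hkp hp0, nsmul_eq_mul]
  rw [hdiag, Finset.sum_congr rfl hin, Finset.sum_sub_distrib,
    G1 s (fun i => (fcount s (k - 1) i : ℝ)), hcross, Finset.sum_const, card_A hkp,
    nsmul_eq_mul, Nat.cast_sub hk1, Nat.cast_one]
  field_simp
  ring

include ht hk1 hkp in
lemma case_FF (hm : k - 1 < p) :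
    (Bsq t * (Fmat s)ᵀ * Bblock k p p * Fmat s * Bsq t).trace
      = ((k : ℝ) * t - 1) * ((k : ℝ) - 1) / ((k : ℝ) * t) -
        ((xiSum s k : ℝ) - 2 * (fcount s k (s ⟨k - 1, hm⟩) : ℝ) + 1) / k := by
  have ht1 : 1 ≤ t := by omega
  have hp0 : 0 < p := by omega
  have hk0 : (k : ℝ) ≠ 0 := Nat.cast_ne_zero.mpr (by omega)
  have ht0 : (t : ℝ) ≠ 0 := Nat.cast_ne_zero.mpr (by omega)
  rw [trace_red ht1 k]
  simp only [R_FF s]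
  rw [sum_Bblock]
  have hdiag : ∑ a ∈ (univ : Finset (Fin p)).filter (fun a : Fin p => (a : ℕ) < k),
      (if (a : ℕ) = 0 ∨ (a : ℕ) = 0 then (0 : ℝ)
        else (if sprev s a = sprev s a then 1 else 0) - 1 / t)
      = ((k - 1 : ℕ) : ℝ) * (1 - 1 / t) := by
    simp only [or_self]
    rw [sum_if_zero]
    simp only [if_true]
    rw [Finset.sum_const, card_A' hk1 hkp hp0, nsmul_eq_mul]
  have hsq : ∑ i, (fcount s (k - 1) i : ℝ) * (fcount s (k - 1) i : ℝ)
      = (xiSum s k : ℝ) - 2 * (fcount s k (s ⟨k - 1, hm⟩) : ℝ) + 1 := by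
    have e : ∀ i ∈ (univ : Finset (Fin t)),
        (fcount s (k - 1) i : ℝ) * (fcount s (k - 1) i : ℝ)
        = (fcount s k i : ℝ) * (fcount s k i : ℝ)
          - (if s ⟨k - 1, hm⟩ = i then 2 * (fcount s k i : ℝ) - 1 else 0) := by
      intro i _
      rw [fcount_cast s hk1 hm i]
      by_cases h : s ⟨k - 1, hm⟩ = i <;> simp [h] <;> ring
    rw [Finset.sum_congr rfl e, Finset.sum_sub_distrib, ← xiSum_cast s,
      Finset.sum_ite_eq, if_pos (Finset.mem_univ _)]
    ring
  have hin : ∀ a ∈ (univ : Finset (Fin p)).filter (fun a : Fin p => (a : ℕ) < k),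
      ∑ b ∈ (univ : Finset (Fin p)).filter (fun b : Fin p => (b : ℕ) < k),
        (if (a : ℕ) = 0 ∨ (b : ℕ) = 0 then (0 : ℝ)
          else (if sprev s b = sprev s a then 1 else 0) - 1 / t)
      = if (a : ℕ) = 0 then (0 : ℝ)
        else (fcount s (k - 1) (sprev s a) : ℝ) - ((k - 1 : ℕ) : ℝ) * (1 / t) := by
    intro a _
    by_cases ha : (a : ℕ) = 0
    · simp [ha]
    · simp only [ha, false_or, if_false]
      rw [sum_if_zero, Finset.sum_sub_distrib, C2 s hkp (sprev s a), Finset.sum_const,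
        card_A' hk1 hkp hp0, nsmul_eq_mul]
  rw [hdiag, Finset.sum_congr rfl hin, sum_if_zero, Finset.sum_sub_distrib,
    G2 s hkp (fun i => (fcount s (k - 1) i : ℝ)), hsq, Finset.sum_const,
    card_A' hk1 hkp hp0, nsmul_eq_mul, Nat.cast_sub hk1, Nat.cast_one]
  field_simp
  ring

end Cases

end AuxTr

/-- The trace identities
`tr(B_t T_s' B^k_p T_s B_t) = k − ξ_k/k`,
`tr(B_t T_s' B^k_p F_s B_t) = (k ρ_k + f_{k,t_k} − ξ_k)/k`, and
`tr(B_t F_s' B^k_p F_s B_t) = (kt−1)(k−1)/(kt) − (ξ_k − 2 f_{k,t_k} + 1)/k`. -/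
theorem trace_identities
    (p t : ℕ) (hp : 2 ≤ p) (ht : 2 ≤ t)
    (s : Fin p → Fin t) (k : ℕ) (hk1 : 1 ≤ k) (hkp : k ≤ p) :
    (Bsq t * (Tmat s)ᵀ * Bblock k p p * Tmat s * Bsq t).trace =
      (k : ℝ) - (xiSum s k : ℝ) / k ∧
    (Bsq t * (Tmat s)ᵀ * Bblock k p p * Fmat s * Bsq t).trace =
      ((k : ℝ) * (rhoCount s k : ℝ) +
        (fcount s k (s ⟨k - 1, by omega⟩) : ℝ) - (xiSum s k : ℝ)) / k ∧
    (Bsq t * (Fmat s)ᵀ * Bblock k p p * Fmat s * Bsq t).trace =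
      ((k : ℝ) * t - 1) * ((k : ℝ) - 1) / ((k : ℝ) * t) -
        ((xiSum s k : ℝ) - 2 * (fcount s k (s ⟨k - 1, by omega⟩) : ℝ) + 1) / k := by
  exact ⟨case_TT s ht hk1 hkp, case_TF s ht hk1 hkp (by omega),
    case_FF s ht hk1 hkp (by omega)⟩

end
end
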